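/- Let {A_k : ℝ^m → ℝ^m, k ∈ ℤ} be a sequence of linear isomorphisms for which there is a constant N > 0 with ‖A_k‖ ≤ N and ‖A_k⁻¹‖ ≤ N for all k. Then the following two statements are equivalent: (a) for every bounded sequence {w_k ∈ ℝ^m, k ∈ ℤ} there exists a bounded sequence {v_k ∈ ℝ^m, k ∈ ℤ} such that v_{k+1} = A_k v_k + w_k for all k ∈ ℤ; (b) the sequence {A_k} is hyperbolic on the ray [0, +∞), hyperbolic on the ray (−∞, 0], and the subspaces B⁺(𝒜) and B⁻(𝒜) are transverse, i.e. B⁺(𝒜) + B⁻(𝒜) = ℝ^m. -/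

import Mathlib

open Filter Topology

/-- Transition map `Φ(k,l)` for `k = l + n`, `n ≥ 0`:
`Φ(l+n+1, l) = A_{l+n} ∘ Φ(l+n, l)`. -/
noncomputable def PhiPos {m : ℕ}
    (A : ℤ → (EuclideanSpace ℝ (Fin m) ≃L[ℝ] EuclideanSpace ℝ (Fin m))) (l : ℤ) :
    ℕ → (EuclideanSpace ℝ (Fin m) →L[ℝ] EuclideanSpace ℝ (Fin m))
  | 0 => 1
  | n + 1 =>
      ((A (l + n) : EuclideanSpace ℝ (Fin m) →L[ℝ] EuclideanSpace ℝ (Fin m))).comp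
        (PhiPos A l n)

/-- Transition map `Φ(k,l)` for `l = k + n`, `n ≥ 0`:
`Φ(k, k+n+1) = Φ(k, k+n) ∘ A_{k+n}⁻¹`. -/
noncomputable def PhiNeg {m : ℕ}
    (A : ℤ → (EuclideanSpace ℝ (Fin m) ≃L[ℝ] EuclideanSpace ℝ (Fin m))) (k : ℤ) :
    ℕ → (EuclideanSpace ℝ (Fin m) →L[ℝ] EuclideanSpace ℝ (Fin m))
  | 0 => 1
  | n + 1 =>
      (PhiNeg A k n).comp
        (((A (k + n)).symm : EuclideanSpace ℝ (Fin m) →L[ℝ] EuclideanSpace ℝ (Fin m)))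

/-- The transition maps `Φ(k,l)`: `Φ(k,l) = A_{k-1} ∘ ⋯ ∘ A_l` for `l < k`,
`Φ(k,k) = Id`, and `Φ(k,l) = A_k⁻¹ ∘ ⋯ ∘ A_{l-1}⁻¹` for `l > k`. -/
noncomputable def Phi {m : ℕ}
    (A : ℤ → (EuclideanSpace ℝ (Fin m) ≃L[ℝ] EuclideanSpace ℝ (Fin m))) (k l : ℤ) :
    EuclideanSpace ℝ (Fin m) →L[ℝ] EuclideanSpace ℝ (Fin m) :=
  if l ≤ k then PhiPos A l (k - l).toNat else PhiNeg A k (l - k).toNat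

/-- `B⁺(𝒜) = {v : ‖Φ(k,0)v‖ → 0 as k → +∞}`. -/
def Bplus {m : ℕ}
    (A : ℤ → (EuclideanSpace ℝ (Fin m) ≃L[ℝ] EuclideanSpace ℝ (Fin m))) :
    Set (EuclideanSpace ℝ (Fin m)) :=
  {v | Tendsto (fun k : ℤ => ‖Phi A k 0 v‖) atTop (𝓝 0)}

/-- `B⁻(𝒜) = {v : ‖Φ(k,0)v‖ → 0 as k → -∞}`. -/
def Bminus {m : ℕ}
    (A : ℤ → (EuclideanSpace ℝ (Fin m) ≃L[ℝ] EuclideanSpace ℝ (Fin m))) :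
    Set (EuclideanSpace ℝ (Fin m)) :=
  {v | Tendsto (fun k : ℤ => ‖Phi A k 0 v‖) atBot (𝓝 0)}

/-- The sequence `𝒜` is hyperbolic on the ray `[0, +∞)`. -/
def HyperbolicOnPlusRay {m : ℕ}
    (A : ℤ → (EuclideanSpace ℝ (Fin m) ≃L[ℝ] EuclideanSpace ℝ (Fin m))) : Prop :=
  ∃ (C lam : ℝ)
    (P : ℤ → (EuclideanSpace ℝ (Fin m) →L[ℝ] EuclideanSpace ℝ (Fin m))),
    0 < C ∧ lam ∈ Set.Ioo (0 : ℝ) 1 ∧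
    (∀ k : ℤ, 0 ≤ k → (P k).comp (P k) = P k) ∧
    (∀ k l : ℤ, 0 ≤ k → 0 ≤ l → (P k).comp (Phi A k l) = (Phi A k l).comp (P l)) ∧
    (∀ k l : ℤ, 0 ≤ l → l ≤ k → ∀ v : EuclideanSpace ℝ (Fin m),
      ‖Phi A k l (P l v)‖ ≤ C * lam ^ (k - l).toNat * ‖v‖) ∧
    (∀ k l : ℤ, 0 ≤ k → k ≤ l → ∀ v : EuclideanSpace ℝ (Fin m),
      ‖Phi A k l ((1 - P l) v)‖ ≤ C * lam ^ (l - k).toNat * ‖v‖)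

/-- The sequence `𝒜` is hyperbolic on the ray `(-∞, 0]`. -/
def HyperbolicOnMinusRay {m : ℕ}
    (A : ℤ → (EuclideanSpace ℝ (Fin m) ≃L[ℝ] EuclideanSpace ℝ (Fin m))) : Prop :=
  ∃ (C lam : ℝ)
    (Q : ℤ → (EuclideanSpace ℝ (Fin m) →L[ℝ] EuclideanSpace ℝ (Fin m))),
    0 < C ∧ lam ∈ Set.Ioo (0 : ℝ) 1 ∧
    (∀ k : ℤ, k ≤ 0 → (Q k).comp (Q k) = Q k) ∧
    (∀ k l : ℤ, k ≤ 0 → l ≤ 0 → (Q k).comp (Phi A k l) = (Phi A k l).comp (Q l)) ∧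
    (∀ k l : ℤ, l ≤ k → k ≤ 0 → ∀ v : EuclideanSpace ℝ (Fin m),
      ‖Phi A k l (Q l v)‖ ≤ C * lam ^ (k - l).toNat * ‖v‖) ∧
    (∀ k l : ℤ, k ≤ l → l ≤ 0 → ∀ v : EuclideanSpace ℝ (Fin m),
      ‖Phi A k l ((1 - Q l) v)‖ ≤ C * lam ^ (l - k).toNat * ‖v‖)
set_option maxHeartbeats 1000000

abbrev Emm (m : ℕ) := EuclideanSpace ℝ (Fin m)

section PlissAux

variable {m : ℕ} (A : ℤ → (Emm m ≃L[ℝ] Emm m))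

lemma phiNeg_left_peel (k : ℤ) (n : ℕ) :
    PhiNeg A k (n+1) = (((A k).symm : Emm m →L[ℝ] Emm m)).comp (PhiNeg A (k+1) n) := by
  induction n generalizing k with
  | zero =>
    show (PhiNeg A k 0).comp _ = _
    ext v
    simp [PhiNeg]
  | succ n ih =>
    show (PhiNeg A k (n+1)).comp (((A (k + (n+1:ℕ))).symm : Emm m →L[ℝ] Emm m)) = _
    rw [ih k]
    have h : (k + ((n:ℤ)+1)) = (k+1) + (n:ℤ) := by ring
    show ((((A k).symm : Emm m →L[ℝ] Emm m)).comp (PhiNeg A (k+1) n)).comp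
        (((A (k + ((n:ℤ)+1))).symm : Emm m →L[ℝ] Emm m)) = _
    rw [h]
    rfl

lemma phiPos_right_peel (l : ℤ) (n : ℕ) :
    PhiPos A l (n+1) = (PhiPos A (l+1) n).comp ((A l : Emm m →L[ℝ] Emm m)) := by
  induction n generalizing l with
  | zero =>
    show ((A (l + (0:ℕ)) : Emm m →L[ℝ] Emm m)).comp (PhiPos A l 0) = _
    ext v
    simp [PhiPos]
  | succ n ih =>
    show ((A (l + ((n:ℤ)+1)) : Emm m →L[ℝ] Emm m)).comp (PhiPos A l (n+1)) = _
    rw [ih l]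
    have h : (l + ((n:ℤ)+1)) = (l+1) + (n:ℤ) := by ring
    rw [h]
    rfl

lemma phi_self (k : ℤ) : Phi A k k = 1 := by
  simp [Phi, PhiPos]

lemma phi_succ (k l : ℤ) :
    Phi A (k+1) l = ((A k : Emm m →L[ℝ] Emm m)).comp (Phi A k l) := by
  rcases le_or_gt l k with h | h
  · have h1 : l ≤ k + 1 := by omega
    have h2 : (k + 1 - l).toNat = (k - l).toNat + 1 := by omega
    rw [Phi, Phi, if_pos h1, if_pos h, h2]
    show ((A (l + ((k-l).toNat:ℤ)) : Emm m →L[ℝ] Emm m)).comp (PhiPos A l (k-l).toNat) = _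
    have h3 : (l + ((k-l).toNat:ℤ)) = k := by omega
    rw [h3]
  · rcases eq_or_lt_of_le (by omega : k + 1 ≤ l) with h1 | h1
    · subst h1
      rw [Phi, Phi, if_pos le_rfl, if_neg (by omega)]
      have h2 : (k + 1 - (k+1)).toNat = 0 := by omega
      have h3 : (k + 1 - k).toNat = 1 := by omega
      rw [h2, h3]
      show (1 : Emm m →L[ℝ] Emm m) = _
      ext v
      simp [PhiNeg, PhiPos]
    · rw [Phi, Phi, if_neg (by omega), if_neg (by omega)]
      have h2 : (l - k).toNat = (l - (k+1)).toNat + 1 := by omega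
      rw [h2, phiNeg_left_peel]
      ext v
      simp

lemma phi_pred (k l : ℤ) :
    Phi A (k-1) l = (((A (k-1)).symm : Emm m →L[ℝ] Emm m)).comp (Phi A k l) := by
  have h := phi_succ A (k-1) l
  rw [show k - 1 + 1 = k by ring] at h
  rw [h]
  ext v
  simp

lemma phi_eq (k j l : ℤ) : Phi A k l = (Phi A k j).comp (Phi A j l) := by
  have base : Phi A j l = (Phi A j j).comp (Phi A j l) := by
    rw [phi_self]; ext v; simp
  have up : ∀ k, j ≤ k → Phi A k l = (Phi A k j).comp (Phi A j l) := by
    refine Int.le_induction base ?_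
    intro k _ ih
    rw [phi_succ, phi_succ, ih, ContinuousLinearMap.comp_assoc]
  have down : ∀ k, k ≤ j → Phi A k l = (Phi A k j).comp (Phi A j l) := by
    refine Int.le_induction_down base ?_
    intro k _ ih
    rw [phi_pred, phi_pred, ih, ContinuousLinearMap.comp_assoc]
  rcases le_total j k with h | h
  · exact up k h
  · exact down k h

lemma phi_apply_phi (k j l : ℤ) (v : Emm m) :
    Phi A k j (Phi A j l v) = Phi A k l v := by
  rw [phi_eq A k j l]; rfl

lemma phi_self_apply (k : ℤ) (v : Emm m) : Phi A k k v = v := by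
  rw [phi_self]
  simp

lemma phi_succ_apply (k l : ℤ) (v : Emm m) : Phi A (k+1) l v = A k (Phi A k l v) := by
  rw [phi_succ]
  rfl

end PlissAux

section PsiSection

variable {m : ℕ}

noncomputable def Wseq (B : ℕ → (Emm m ≃L[ℝ] Emm m)) : ℕ → (Emm m ≃L[ℝ] Emm m)
  | 0 => ContinuousLinearEquiv.refl ℝ (Emm m)
  | n + 1 => (Wseq B n).trans (B n)

noncomputable def Psi (B : ℕ → (Emm m ≃L[ℝ] Emm m)) (n l : ℕ) : Emm m →L[ℝ] Emm m :=
  (((Wseq B l).symm.trans (Wseq B n) : Emm m ≃L[ℝ] Emm m) : Emm m →L[ℝ] Emm m)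

variable (B : ℕ → (Emm m ≃L[ℝ] Emm m))

lemma psi_apply (n l : ℕ) (v : Emm m) : Psi B n l v = Wseq B n ((Wseq B l).symm v) := rfl

lemma psi_self (n : ℕ) : Psi B n n = 1 := by
  ext v; simp [psi_apply]

lemma psi_zero_right (n : ℕ) (v : Emm m) : Psi B n 0 v = Wseq B n v := by
  simp [psi_apply, Wseq]

lemma psi_succ (n l : ℕ) (v : Emm m) : Psi B (n+1) l v = B n (Psi B n l v) := by
  simp [psi_apply, Wseq, ContinuousLinearEquiv.trans_apply]

lemma psi_psi (n j l : ℕ) (v : Emm m) : Psi B n j (Psi B j l v) = Psi B n l v := by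
  simp [psi_apply]

lemma psi_eq_zero_iff (n l : ℕ) (v : Emm m) : Psi B n l v = 0 ↔ v = 0 := by
  constructor
  · intro h
    have h1 : Wseq B n ((Wseq B l).symm v) = 0 := h
    have h2 : (Wseq B l).symm v = 0 := by
      have := congrArg (Wseq B n).symm h1
      simpa using this
    have := congrArg (Wseq B l) h2
    simpa using this
  · rintro rfl; simp [psi_apply]

lemma psi_norm_pos (n l : ℕ) {v : Emm m} (hv : v ≠ 0) : 0 < ‖Psi B n l v‖ := by
  rw [norm_pos_iff]
  exact fun h => hv ((psi_eq_zero_iff B n l v).mp h)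

end PsiSection

section Dictionary

variable {m : ℕ} (A : ℤ → (Emm m ≃L[ℝ] Emm m))

/-- the forward system -/
noncomputable def Bplusseq : ℕ → (Emm m ≃L[ℝ] Emm m) := fun n => A (n : ℤ)

/-- the backward system -/
noncomputable def Bminusseq : ℕ → (Emm m ≃L[ℝ] Emm m) := fun n => (A (-1 - (n:ℤ))).symm

lemma phiPos_zero_eq (n : ℕ) :
    PhiPos A 0 n = ((Wseq (Bplusseq A) n : Emm m ≃L[ℝ] Emm m) : Emm m →L[ℝ] Emm m) := by
  induction n with
  | zero => ext v; simp [PhiPos, Wseq]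
  | succ n ih =>
    show ((A (0 + (n:ℤ)) : Emm m →L[ℝ] Emm m)).comp (PhiPos A 0 n) = _
    rw [zero_add, ih]
    ext v
    simp [Wseq, ContinuousLinearEquiv.trans_apply, Bplusseq]

lemma phiNeg_zero_eq (n : ℕ) :
    PhiNeg A 0 n = (((Wseq (Bplusseq A) n).symm : Emm m ≃L[ℝ] Emm m) : Emm m →L[ℝ] Emm m) := by
  induction n with
  | zero => ext v; simp [PhiNeg, Wseq]
  | succ n ih =>
    show (PhiNeg A 0 n).comp (((A (0 + (n:ℤ))).symm : Emm m →L[ℝ] Emm m)) = _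
    rw [zero_add, ih]
    ext v
    simp [Wseq, Bplusseq]

lemma dict_plus (k l : ℤ) (hk : 0 ≤ k) (hl : 0 ≤ l) :
    Phi A k l = Psi (Bplusseq A) k.toNat l.toNat := by
  have hk0 : Phi A k 0 = ((Wseq (Bplusseq A) k.toNat : Emm m ≃L[ℝ] Emm m) : Emm m →L[ℝ] Emm m) := by
    rw [Phi, if_pos hk]
    have : (k - 0).toNat = k.toNat := by omega
    rw [this, phiPos_zero_eq]
  have h0l : Phi A 0 l = (((Wseq (Bplusseq A) l.toNat).symm : Emm m ≃L[ℝ] Emm m) : Emm m →L[ℝ] Emm m) := by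
    rcases eq_or_lt_of_le hl with h | h
    · have : l = 0 := h.symm
      subst this
      rw [phi_self]
      ext v; simp [Wseq]
    · rw [Phi, if_neg (by omega)]
      have : (l - 0).toNat = l.toNat := by omega
      rw [this, phiNeg_zero_eq]
  rw [phi_eq A k 0 l, hk0, h0l]
  ext v
  simp [psi_apply]

lemma wminus_eq_phiNeg (n : ℕ) :
    PhiNeg A (-(n:ℤ)) n = ((Wseq (Bminusseq A) n : Emm m ≃L[ℝ] Emm m) : Emm m →L[ℝ] Emm m) := by
  induction n with
  | zero => ext v; simp [PhiNeg, Wseq]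
  | succ n ih =>
    rw [phiNeg_left_peel]
    have h1 : (-(((n:ℤ))+1) + 1) = -(n:ℤ) := by ring
    show (((A (-((n:ℤ)+1))).symm : Emm m →L[ℝ] Emm m)).comp (PhiNeg A (-((n:ℤ)+1) + 1) n) = _
    rw [h1, ih]
    ext v
    have h2 : (-((n:ℤ)+1)) = -1 - (n:ℤ) := by ring
    simp [Wseq, ContinuousLinearEquiv.trans_apply, Bminusseq, h2]

lemma wminus_symm_eq_phiPos (n : ℕ) :
    PhiPos A (-(n:ℤ)) n = (((Wseq (Bminusseq A) n).symm : Emm m ≃L[ℝ] Emm m) : Emm m →L[ℝ] Emm m) := by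
  induction n with
  | zero => ext v; simp [PhiPos, Wseq]
  | succ n ih =>
    rw [phiPos_right_peel]
    have h1 : (-(((n:ℤ))+1) + 1) = -(n:ℤ) := by ring
    show (PhiPos A (-((n:ℤ)+1) + 1) n).comp ((A (-((n:ℤ)+1)) : Emm m →L[ℝ] Emm m)) = _
    rw [h1, ih]
    ext v
    have h2 : (-((n:ℤ)+1)) = -1 - (n:ℤ) := by ring
    simp [Wseq, Bminusseq, h2]

lemma dict_minus (k l : ℤ) (hk : k ≤ 0) (hl : l ≤ 0) :
    Phi A k l = Psi (Bminusseq A) (-k).toNat (-l).toNat := by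
  have hk0 : Phi A k 0 = ((Wseq (Bminusseq A) (-k).toNat : Emm m ≃L[ℝ] Emm m) : Emm m →L[ℝ] Emm m) := by
    rcases eq_or_lt_of_le hk with h | h
    · subst h
      rw [phi_self]
      ext v; simp [Wseq]
    · obtain ⟨n, hn⟩ : ∃ n : ℕ, k = -(n:ℤ) := ⟨(-k).toNat, by omega⟩
      subst hn
      rw [Phi, if_neg (by omega), show (0 - -(n:ℤ)).toNat = n by omega,
        show (- -(n:ℤ)).toNat = n by omega]
      exact wminus_eq_phiNeg A n
  have h0l : Phi A 0 l = (((Wseq (Bminusseq A) (-l).toNat).symm : Emm m ≃L[ℝ] Emm m) : Emm m →L[ℝ] Emm m) := by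
    rcases eq_or_lt_of_le hl with h | h
    · subst h
      rw [phi_self]
      ext v; simp [Wseq]
    · obtain ⟨n, hn⟩ : ∃ n : ℕ, l = -(n:ℤ) := ⟨(-l).toNat, by omega⟩
      subst hn
      rw [Phi, if_pos hl, show (0 - -(n:ℤ)).toNat = n by omega,
        show (- -(n:ℤ)).toNat = n by omega]
      exact wminus_symm_eq_phiPos A n
  rw [phi_eq A k 0 l, hk0, h0l]
  ext v
  simp [psi_apply]

end Dictionary
section Scalar

lemma bddAbove_range_of_eventually {f : ℕ → ℝ} {n₀ : ℕ} {M : ℝ}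
    (h : ∀ n, n₀ ≤ n → f n ≤ M) : BddAbove (Set.range f) := by
  refine ⟨max M (∑ j ∈ Finset.range n₀, |f j|), ?_⟩
  rintro y ⟨n, rfl⟩
  rcases le_or_gt n₀ n with hn | hn
  · exact le_max_of_le_left (h n hn)
  · refine le_max_of_le_right ?_
    calc f n ≤ |f n| := le_abs_self _
    _ ≤ ∑ j ∈ Finset.range n₀, |f j| :=
        Finset.single_le_sum (fun j _ => abs_nonneg (f j)) (Finset.mem_range.mpr hn)

lemma scalarL_up (x : ℕ → ℝ) (hx : ∀ j, 0 < x j) (K : ℝ) (hK : 2 ≤ K) (l : ℕ)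
    (h : ∀ k, l < k → x k * (∑ i ∈ Finset.Ioc l k, (x i)⁻¹) ≤ K) :
    ∀ n : ℕ, x (l+1+n) ≤ K * (K/(K+1)) ^ n * x (l+1) := by
  have hK0 : (0:ℝ) < K := by linarith
  have hK1 : (0:ℝ) < K - 1 := by linarith
  have hKp1 : (0:ℝ) < K + 1 := by linarith
  set b : ℕ → ℝ := fun k => ∑ i ∈ Finset.Ioc l k, (x i)⁻¹ with hb
  have hbstep : ∀ k, l ≤ k → b (k+1) = b k + (x (k+1))⁻¹ := by
    intro k hk
    simp only [hb]
    rw [Finset.sum_Ioc_succ_top hk]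
  have hinv : ∀ k, l < k → b k / K ≤ (x k)⁻¹ := by
    intro k hk
    rw [div_le_iff₀ hK0]
    calc b k ≤ K / x k := by
          rw [le_div_iff₀ (hx k)]
          calc b k * x k = x k * b k := by ring
          _ ≤ K := h k hk
    _ = (x k)⁻¹ * K := by rw [div_eq_mul_inv]; ring
  have hb1 : b (l+1) = (x (l+1))⁻¹ := by
    simp only [hb]
    rw [show Finset.Ioc l (l+1) = {l+1} by ext j; simp only [Finset.mem_Ioc, Finset.mem_singleton]; omega]
    simp
  have growth : ∀ n : ℕ, (x (l+1))⁻¹ * (K/(K-1)) ^ n ≤ b (l+1+n) := by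
    intro n
    induction n with
    | zero => simp [hb1]
    | succ n ih =>
      have h1 := hbstep (l+1+n) (by omega)
      have h2 := hinv (l+1+n+1) (by omega)
      have hup : b (l+1+n) * (K/(K-1)) ≤ b (l+1+n+1) := by
        have hdown : b (l+1+n) ≤ b (l+1+n+1) * ((K-1)/K) := by
          have : b (l+1+n) = b (l+1+n+1) - (x (l+1+n+1))⁻¹ := by linarith
          rw [this]
          have h3 : b (l+1+n+1)/K ≤ (x (l+1+n+1))⁻¹ := h2
          have : b (l+1+n+1) * ((K-1)/K) = b (l+1+n+1) - b (l+1+n+1)/K := by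
            field_simp
          linarith
        calc b (l+1+n) * (K/(K-1)) ≤ (b (l+1+n+1) * ((K-1)/K)) * (K/(K-1)) :=
            mul_le_mul_of_nonneg_right hdown (by positivity)
        _ = b (l+1+n+1) := by field_simp
      calc (x (l+1))⁻¹ * (K/(K-1)) ^ (n+1) = ((x (l+1))⁻¹ * (K/(K-1)) ^ n) * (K/(K-1)) := by
            ring
      _ ≤ b (l+1+n) * (K/(K-1)) := mul_le_mul_of_nonneg_right ih (by positivity)
      _ ≤ b (l+1+n+1) := hup
      _ = b (l+1+(n+1)) := by ring_nf
  intro n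
  have hbpos : (0:ℝ) < (x (l+1))⁻¹ * (K/(K-1)) ^ n :=
    mul_pos (inv_pos.mpr (hx _)) (pow_pos (by positivity) _)
  have hbn : (0:ℝ) < b (l+1+n) := lt_of_lt_of_le hbpos (growth n)
  have h1 : x (l+1+n) ≤ K / b (l+1+n) := by
    rw [le_div_iff₀ hbn]
    calc x (l+1+n) * b (l+1+n) = x (l+1+n) * b (l+1+n) := rfl
    _ ≤ K := h (l+1+n) (by omega)
  have h2 : K / b (l+1+n) ≤ K / ((x (l+1))⁻¹ * (K/(K-1)) ^ n) :=
    div_le_div_of_nonneg_left (le_of_lt hK0) hbpos (growth n)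
  have h3 : K / ((x (l+1))⁻¹ * (K/(K-1)) ^ n) = K * ((K-1)/K) ^ n * x (l+1) := by
    rw [div_eq_mul_inv, mul_inv, inv_inv, ← inv_pow,
      show (K/(K-1))⁻¹ = (K-1)/K by rw [inv_div]]
    ring
  have h4 : ((K-1)/K) ^ n ≤ (K/(K+1)) ^ n := by
    apply pow_le_pow_left₀ (by positivity)
    rw [div_le_div_iff₀ hK0 hKp1]
    nlinarith
  calc x (l+1+n) ≤ K / b (l+1+n) := h1
  _ ≤ K / ((x (l+1))⁻¹ * (K/(K-1)) ^ n) := h2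
  _ = K * ((K-1)/K) ^ n * x (l+1) := h3
  _ ≤ K * (K/(K+1)) ^ n * x (l+1) := by
      apply mul_le_mul_of_nonneg_right ?_ (le_of_lt (hx (l+1)))
      exact mul_le_mul_of_nonneg_left h4 (le_of_lt hK0)

lemma scalarL_down (x : ℕ → ℝ) (hx : ∀ j, 0 < x j) (K : ℝ) (hK : 2 ≤ K) (l : ℕ)
    (h : ∀ k, k < l → x k * (∑ i ∈ Finset.Ioc k l, (x i)⁻¹) ≤ K) :
    ∀ k, k < l → x k ≤ K * (K/(K+1)) ^ (l-1-k) * x l := by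
  have hK0 : (0:ℝ) < K := by linarith
  have hKp1 : (0:ℝ) < K + 1 := by linarith
  set b : ℕ → ℝ := fun j => ∑ i ∈ Finset.Ioc j l, (x i)⁻¹ with hb
  have hbstep : ∀ j, j + 1 ≤ l → b j = b (j+1) + (x (j+1))⁻¹ := by
    intro j hj
    simp only [hb]
    rw [show Finset.Ioc j l = insert (j+1) (Finset.Ioc (j+1) l) by
      ext i; simp [Finset.mem_Ioc, Finset.mem_insert]; omega]
    rw [Finset.sum_insert (by simp [Finset.mem_Ioc])]
    ring
  have hinv : ∀ j, j < l → b j / K ≤ (x j)⁻¹ := by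
    intro j hj
    rw [div_le_iff₀ hK0]
    calc b j ≤ K / x j := by rw [le_div_iff₀ (hx j)]; linarith [h j hj]
    _ = (x j)⁻¹ * K := by rw [div_eq_mul_inv]; ring
  have growth : ∀ d : ℕ, ∀ j : ℕ, j + d + 1 = l → (x l)⁻¹ * ((K+1)/K) ^ d ≤ b j := by
    intro d
    induction d with
    | zero =>
      intro j hj
      have : Finset.Ioc j l = {l} := by ext i; simp [Finset.mem_Ioc]; omega
      simp [hb, this]
    | succ d ih =>
      intro j hj
      have hj1 : j + 1 < l := by omega
      have ihj := ih (j+1) (by omega)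
      have hi := hinv (j+1) hj1
      have hbj := hbstep j (by omega)
      have hbj1_pos : (0:ℝ) < b (j+1) :=
        lt_of_lt_of_le (mul_pos (inv_pos.mpr (hx _)) (pow_pos (by positivity) _)) ihj
      have : b j ≥ b (j+1) * ((K+1)/K) := by
        rw [hbj]
        have : b (j+1)/K ≤ (x (j+1))⁻¹ := hi
        have heq : b (j+1) * ((K+1)/K) = b (j+1) + b (j+1)/K := by field_simp
        rw [ge_iff_le, heq]
        linarith
      calc (x l)⁻¹ * ((K+1)/K) ^ (d+1) = ((x l)⁻¹ * ((K+1)/K) ^ d) * ((K+1)/K) := by ring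
      _ ≤ b (j+1) * ((K+1)/K) := mul_le_mul_of_nonneg_right ihj (by positivity)
      _ ≤ b j := this
  intro k hk
  have hgr := growth (l-1-k) k (by omega)
  have hbpos : (0:ℝ) < (x l)⁻¹ * ((K+1)/K) ^ (l-1-k) :=
    mul_pos (inv_pos.mpr (hx _)) (pow_pos (by positivity) _)
  have hbk : (0:ℝ) < b k := lt_of_lt_of_le hbpos hgr
  have h1 : x k ≤ K / b k := by rw [le_div_iff₀ hbk]; exact h k hk
  have h2 : K / b k ≤ K / ((x l)⁻¹ * ((K+1)/K) ^ (l-1-k)) :=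
    div_le_div_of_nonneg_left (le_of_lt hK0) hbpos hgr
  have h3 : K / ((x l)⁻¹ * ((K+1)/K) ^ (l-1-k)) = K * (K/(K+1)) ^ (l-1-k) * x l := by
    rw [div_eq_mul_inv, mul_inv, inv_inv, ← inv_pow,
      show ((K+1)/K)⁻¹ = K/(K+1) by rw [inv_div]]
    ring
  calc x k ≤ K / b k := h1
  _ ≤ K / ((x l)⁻¹ * ((K+1)/K) ^ (l-1-k)) := h2
  _ = K * (K/(K+1)) ^ (l-1-k) * x l := h3

end Scalar
section HalfLine

variable {m : ℕ}

lemma bdd_range_iff {f : ℕ → ℝ} : BddAbove (Set.range f) ↔ ∃ M, ∀ n, f n ≤ M := by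
  constructor
  · rintro ⟨M, hM⟩
    exact ⟨M, fun n => hM ⟨n, rfl⟩⟩
  · rintro ⟨M, hM⟩
    exact ⟨M, by rintro y ⟨n, rfl⟩; exact hM n⟩

variable (B : ℕ → (Emm m ≃L[ℝ] Emm m))

lemma homog_prop (d : ℕ → Emm m) (hd : ∀ n, d (n+1) = B n (d n)) :
    ∀ n, d n = Psi B n 0 (d 0) := by
  intro n
  induction n with
  | zero => rw [psi_self]; rfl
  | succ n ih => rw [hd n, ih, psi_succ]

/-- The stable subspace at time 0. -/
noncomputable def StableSet : Submodule ℝ (Emm m) where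
  carrier := {ξ | BddAbove (Set.range fun n => ‖Psi B n 0 ξ‖)}
  add_mem' := by
    rintro a b ha hb
    rw [Set.mem_setOf_eq, bdd_range_iff] at *
    obtain ⟨Ma, hMa⟩ := ha
    obtain ⟨Mb, hMb⟩ := hb
    refine ⟨Ma + Mb, fun n => ?_⟩
    calc ‖Psi B n 0 (a + b)‖ = ‖Psi B n 0 a + Psi B n 0 b‖ := by rw [map_add]
    _ ≤ ‖Psi B n 0 a‖ + ‖Psi B n 0 b‖ := norm_add_le _ _
    _ ≤ Ma + Mb := add_le_add (hMa n) (hMb n)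
  zero_mem' := by
    rw [Set.mem_setOf_eq, bdd_range_iff]
    exact ⟨0, fun n => by simp⟩
  smul_mem' := by
    rintro c a ha
    rw [Set.mem_setOf_eq, bdd_range_iff] at *
    obtain ⟨Ma, hMa⟩ := ha
    refine ⟨‖c‖ * Ma, fun n => ?_⟩
    calc ‖Psi B n 0 (c • a)‖ = ‖c‖ * ‖Psi B n 0 a‖ := by rw [map_smul, norm_smul]
    _ ≤ ‖c‖ * Ma := mul_le_mul_of_nonneg_left (hMa n) (norm_nonneg c)

lemma exists_proj :
    ∃ Pr : Emm m →L[ℝ] Emm m,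
      (∀ ξ : Emm m, ξ ∈ StableSet B → Pr ξ = ξ) ∧
      (∀ ξ : Emm m, Pr ξ ∈ StableSet B) ∧
      Pr.comp Pr = Pr := by
  obtain ⟨q, hq⟩ := Submodule.exists_isCompl (StableSet B)
  set prl : Emm m →ₗ[ℝ] Emm m :=
    (StableSet B).subtype.comp ((StableSet B).projectionOnto q hq) with hprl
  refine ⟨⟨prl, prl.continuous_of_finiteDimensional⟩, ?_, ?_, ?_⟩
  · intro ξ hξ
    show prl ξ = ξ
    simp [hprl, Submodule.projectionOnto_apply_left hq ⟨ξ, hξ⟩]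
  · intro ξ
    show prl ξ ∈ StableSet B
    exact ((StableSet B).projectionOnto q hq ξ).2
  · apply ContinuousLinearMap.ext
    intro ξ
    show prl (prl ξ) = prl ξ
    have : prl ξ ∈ StableSet B := ((StableSet B).projectionOnto q hq ξ).2
    simp [hprl, Submodule.projectionOnto_apply_left hq ⟨prl ξ, this⟩]

end HalfLine
section UniformBound

variable {m : ℕ}

lemma lp_eval_tendsto (g : ℕ → lp (fun _ : ℕ => Emm m) (⊤ : ENNReal)) (g0 : lp (fun _ : ℕ => Emm m) (⊤ : ENNReal))
    (h : Filter.Tendsto g Filter.atTop (nhds g0)) (n : ℕ) :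
    Filter.Tendsto (fun j => (g j : ∀ _ : ℕ, Emm m) n) Filter.atTop
      (nhds ((g0 : ∀ _ : ℕ, Emm m) n)) := by
  rw [tendsto_iff_norm_sub_tendsto_zero] at h ⊢
  refine squeeze_zero (fun j => norm_nonneg _) (fun j => ?_) h
  have := lp.norm_apply_le_norm (ENNReal.top_ne_zero) (g j - g0) n
  simpa [lp.coeFn_sub] using this

lemma exists_uniform_bound
    (B : ℕ → (Emm m ≃L[ℝ] Emm m))
    (hsolve : ∀ w : ℕ → Emm m, BddAbove (Set.range fun n => ‖w n‖) →
      ∃ v : ℕ → Emm m, BddAbove (Set.range fun n => ‖v n‖) ∧ ∀ n, v (n+1) = B n (v n) + w n)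
    (Pr : Emm m →L[ℝ] Emm m)
    (hPr1 : ∀ ξ, ξ ∈ StableSet B → Pr ξ = ξ)
    (hPr2 : ∀ ξ, Pr ξ ∈ StableSet B)
    (hPr3 : Pr.comp Pr = Pr) :
    ∃ K : ℝ, 2 ≤ K ∧ ∀ (w y : ℕ → Emm m) (Cw : ℝ),
      (∀ n, ‖w n‖ ≤ Cw) → (∀ n, y (n+1) = B n (y n) + w n) →
      BddAbove (Set.range fun n => ‖y n‖) → Pr (y 0) = 0 →
      ∀ j, ‖y j‖ ≤ K * Cw := by
  classical
  have hPrPr : ∀ ξ : Emm m, Pr (Pr ξ) = Pr ξ := by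
    intro ξ
    have := congrArg (fun (T : Emm m →L[ℝ] Emm m) => T ξ) hPr3
    simpa using this
  -- uniqueness of bounded solutions with boundary condition
  have uniq : ∀ (w y y' : ℕ → Emm m),
      (∀ n, y (n+1) = B n (y n) + w n) → (∀ n, y' (n+1) = B n (y' n) + w n) →
      BddAbove (Set.range fun n => ‖y n‖) → BddAbove (Set.range fun n => ‖y' n‖) →
      Pr (y 0) = 0 → Pr (y' 0) = 0 → y = y' := by
    intro w y y' hy hy' hyb hy'b h0 h0'
    have hd : ∀ n, (y n - y' n) = Psi B n 0 (y 0 - y' 0) := by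
      apply homog_prop
      intro n
      rw [hy n, hy' n]
      simp only [map_sub]
      abel
    have hdb : BddAbove (Set.range fun n => ‖Psi B n 0 (y 0 - y' 0)‖) := by
      rw [bdd_range_iff] at *
      obtain ⟨M1, hM1⟩ := hyb
      obtain ⟨M2, hM2⟩ := hy'b
      refine ⟨M1 + M2, fun n => ?_⟩
      rw [← hd n]
      calc ‖y n - y' n‖ ≤ ‖y n‖ + ‖y' n‖ := norm_sub_le _ _
      _ ≤ M1 + M2 := add_le_add (hM1 n) (hM2 n)
    have hmem : (y 0 - y' 0) ∈ StableSet B := hdb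
    have h1 : Pr (y 0 - y' 0) = y 0 - y' 0 := hPr1 _ hmem
    have h2 : Pr (y 0 - y' 0) = 0 := by rw [map_sub, h0, h0']; simp
    have h3 : y 0 - y' 0 = 0 := by rw [← h1, h2]
    funext n
    have := hd n
    rw [h3] at this
    simp only [map_zero] at this
    exact sub_eq_zero.mp this
  -- existence with boundary condition
  have exi : ∀ w : lp (fun _ : ℕ => Emm m) (⊤ : ENNReal), ∃ y : lp (fun _ : ℕ => Emm m) (⊤ : ENNReal),
      (∀ n, (y : ∀ _ : ℕ, Emm m) (n+1) = B n ((y : ∀ _ : ℕ, Emm m) n)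
        + (w : ∀ _ : ℕ, Emm m) n) ∧ Pr ((y : ∀ _ : ℕ, Emm m) 0) = 0 := by
    intro w
    obtain ⟨v, hvb, hvrec⟩ := hsolve w (lp.memℓp w).bddAbove
    set s : Emm m := Pr (v 0) with hs
    have hsb : BddAbove (Set.range fun n => ‖Psi B n 0 s‖) := hPr2 (v 0)
    set yf : ℕ → Emm m := fun n => v n - Psi B n 0 s with hyf
    have hyb : BddAbove (Set.range fun n => ‖yf n‖) := by
      rw [bdd_range_iff] at *
      obtain ⟨M1, hM1⟩ := hvb
      obtain ⟨M2, hM2⟩ := hsb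
      refine ⟨M1 + M2, fun n => ?_⟩
      calc ‖v n - Psi B n 0 s‖ ≤ ‖v n‖ + ‖Psi B n 0 s‖ := norm_sub_le _ _
      _ ≤ M1 + M2 := add_le_add (hM1 n) (hM2 n)
    refine ⟨⟨yf, memℓp_infty hyb⟩, ?_, ?_⟩
    · intro n
      show yf (n+1) = B n (yf n) + (w : ∀ _ : ℕ, Emm m) n
      simp only [hyf]
      rw [hvrec n, psi_succ]
      simp only [map_sub]
      abel
    · show Pr (yf 0) = 0
      simp only [hyf]
      rw [map_sub, psi_self]
      show Pr (v 0) - Pr s = 0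
      rw [hs, hPrPr]
      simp
  -- the solution operator
  set Rf : lp (fun _ : ℕ => Emm m) (⊤ : ENNReal) → lp (fun _ : ℕ => Emm m) (⊤ : ENNReal) :=
    fun w => Classical.choose (exi w) with hRf
  have hRspec : ∀ w, (∀ n, (Rf w : ∀ _ : ℕ, Emm m) (n+1)
      = B n ((Rf w : ∀ _ : ℕ, Emm m) n) + (w : ∀ _ : ℕ, Emm m) n)
      ∧ Pr ((Rf w : ∀ _ : ℕ, Emm m) 0) = 0 :=
    fun w => Classical.choose_spec (exi w)
  have hRuniq : ∀ (w y : lp (fun _ : ℕ => Emm m) (⊤ : ENNReal)),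
      (∀ n, (y : ∀ _ : ℕ, Emm m) (n+1) = B n ((y : ∀ _ : ℕ, Emm m) n)
        + (w : ∀ _ : ℕ, Emm m) n) → Pr ((y : ∀ _ : ℕ, Emm m) 0) = 0 → y = Rf w := by
    intro w y hrec h0
    apply lp.ext
    exact uniq w y (Rf w) hrec (hRspec w).1 (lp.memℓp y).bddAbove
      (lp.memℓp (Rf w)).bddAbove h0 (hRspec w).2
  set Rl : lp (fun _ : ℕ => Emm m) (⊤ : ENNReal) →ₗ[ℝ] lp (fun _ : ℕ => Emm m) (⊤ : ENNReal) :=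
    { toFun := Rf
      map_add' := by
        intro a b
        symm
        apply hRuniq
        · intro n
          simp only [lp.coeFn_add, Pi.add_apply, map_add]
          rw [(hRspec a).1 n, (hRspec b).1 n]
          abel
        · simp only [lp.coeFn_add, Pi.add_apply, map_add, (hRspec a).2, (hRspec b).2]
          simp
      map_smul' := by
        intro c a
        symm
        apply hRuniq
        · intro n
          simp only [lp.coeFn_smul, Pi.smul_apply, map_smul, RingHom.id_apply]
          rw [(hRspec a).1 n]
          module
        · simp only [lp.coeFn_smul, Pi.smul_apply, map_smul, RingHom.id_apply, (hRspec a).2]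
          simp } with hRl
  have hcont : Continuous Rl := by
    apply LinearMap.continuous_of_seq_closed_graph
    intro u x y hux huy
    have hy : y = Rf x := by
      apply hRuniq
      · intro n
        have h1 : ∀ j, (Rf (u j) : ∀ _ : ℕ, Emm m) (n+1)
            = B n ((Rf (u j) : ∀ _ : ℕ, Emm m) n) + ((u j : ∀ _ : ℕ, Emm m) n) :=
          fun j => (hRspec (u j)).1 n
        have t1 : Filter.Tendsto (fun j => (Rf (u j) : ∀ _ : ℕ, Emm m) (n+1))
            Filter.atTop (nhds ((y : ∀ _ : ℕ, Emm m) (n+1))) :=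
          lp_eval_tendsto _ _ huy (n+1)
        have t2 : Filter.Tendsto (fun j => B n ((Rf (u j) : ∀ _ : ℕ, Emm m) n)
              + ((u j : ∀ _ : ℕ, Emm m) n))
            Filter.atTop (nhds (B n ((y : ∀ _ : ℕ, Emm m) n) + (x : ∀ _ : ℕ, Emm m) n)) := by
          apply Filter.Tendsto.add
          · exact ((B n).continuous.tendsto _).comp (lp_eval_tendsto _ _ huy n)
          · exact lp_eval_tendsto _ _ hux n
        have := tendsto_nhds_unique (t1.congr (fun j => h1 j)) t2
        exact this
      · have h1 : ∀ j, Pr ((Rf (u j) : ∀ _ : ℕ, Emm m) 0) = 0 := fun j => (hRspec (u j)).2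
        have t1 : Filter.Tendsto (fun j => Pr ((Rf (u j) : ∀ _ : ℕ, Emm m) 0))
            Filter.atTop (nhds (Pr ((y : ∀ _ : ℕ, Emm m) 0))) :=
          (Pr.continuous.tendsto _).comp (lp_eval_tendsto _ _ huy 0)
        have t2 : Filter.Tendsto (fun j => Pr ((Rf (u j) : ∀ _ : ℕ, Emm m) 0))
            Filter.atTop (nhds (0 : Emm m)) := by
          simp only [h1]
          exact tendsto_const_nhds
        exact tendsto_nhds_unique t1 t2
    exact hy
  set Rc : lp (fun _ : ℕ => Emm m) (⊤ : ENNReal) →L[ℝ] lp (fun _ : ℕ => Emm m) (⊤ : ENNReal) := ⟨Rl, hcont⟩ with hRc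
  refine ⟨max ‖Rc‖ 2, le_max_right _ _, ?_⟩
  intro w y Cw hw hyrec hyb hy0 j
  have hCw0 : 0 ≤ Cw := le_trans (norm_nonneg _) (hw 0)
  set w' : lp (fun _ : ℕ => Emm m) (⊤ : ENNReal) := ⟨w, memℓp_infty (bdd_range_iff.mpr ⟨Cw, hw⟩)⟩ with hw'
  set y' : lp (fun _ : ℕ => Emm m) (⊤ : ENNReal) := ⟨y, memℓp_infty hyb⟩ with hy'
  have heq : y' = Rf w' := hRuniq w' y' hyrec hy0
  have h1 : ‖y j‖ ≤ ‖y'‖ := lp.norm_apply_le_norm (ENNReal.top_ne_zero) y' j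
  have h2 : ‖y'‖ = ‖Rc w'‖ := by rw [heq]; rfl
  have h3 : ‖Rc w'‖ ≤ ‖Rc‖ * ‖w'‖ := Rc.le_opNorm w'
  have h4 : ‖w'‖ ≤ Cw := lp.norm_le_of_forall_le hCw0 hw
  calc ‖y j‖ ≤ ‖Rc‖ * ‖w'‖ := by rw [← h2] at h3; exact le_trans h1 h3
  _ ≤ ‖Rc‖ * Cw := mul_le_mul_of_nonneg_left h4 (norm_nonneg _)
  _ ≤ max ‖Rc‖ 2 * Cw := mul_le_mul_of_nonneg_right (le_max_left _ _) hCw0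

end UniformBound
section Estimates

variable {m : ℕ} (B : ℕ → (Emm m ≃L[ℝ] Emm m))

/-- Candidate projections along the half line. -/
noncomputable def PiMap (Pr : Emm m →L[ℝ] Emm m) (n : ℕ) : Emm m →L[ℝ] Emm m :=
  (Psi B n 0).comp (Pr.comp (Psi B 0 n))

lemma piMap_apply (Pr : Emm m →L[ℝ] Emm m) (n : ℕ) (v : Emm m) :
    PiMap B Pr n v = Psi B n 0 (Pr (Psi B 0 n v)) := rfl

variable (NB : ℝ) (hNB : 1 ≤ NB) (hBn : ∀ n, ‖((B n : Emm m →L[ℝ] Emm m))‖ ≤ NB)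
variable (Pr : Emm m →L[ℝ] Emm m)
variable (K : ℝ) (hK2 : 2 ≤ K)
variable (hKbound : ∀ (w y : ℕ → Emm m) (Cw : ℝ),
      (∀ n, ‖w n‖ ≤ Cw) → (∀ n, y (n+1) = B n (y n) + w n) →
      BddAbove (Set.range fun n => ‖y n‖) → Pr (y 0) = 0 →
      ∀ j, ‖y j‖ ≤ K * Cw)

include hK2 hKbound in
lemma est1 (hNB : 1 ≤ NB) (hBn : ∀ n, ‖((B n : Emm m →L[ℝ] Emm m))‖ ≤ NB) :
    ∀ ζ ∈ StableSet B, ∀ l k : ℕ, l ≤ k →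
      ‖Psi B k 0 ζ‖ ≤ (NB * (K+1)) * (K/(K+1)) ^ (k-l) * ‖Psi B l 0 ζ‖ := by
  intro ζ hζ l k hlk
  have hK0 : (0:ℝ) < K := by linarith
  have hKp1 : (0:ℝ) < K + 1 := by linarith
  rcases eq_or_ne ζ 0 with rfl | hζ0
  · simp
  set x : ℕ → ℝ := fun j => ‖Psi B j 0 ζ‖ with hx
  have hxpos : ∀ j, 0 < x j := fun j => psi_norm_pos B j 0 hζ0
  obtain ⟨M, hM⟩ := bdd_range_iff.mp hζ
  -- main scalar hypothesis
  have Hyp : ∀ k', l < k' → x k' * (∑ i ∈ Finset.Ioc l k', (x i)⁻¹) ≤ K := by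
    intro k' hk'
    set w : ℕ → Emm m := fun n =>
      if l ≤ n ∧ n < k' then (x (n+1))⁻¹ • Psi B (n+1) 0 ζ else 0 with hw
    set c : ℕ → ℝ := fun n => ∑ i ∈ Finset.Ioc l (min n k'), (x i)⁻¹ with hc
    set y : ℕ → Emm m := fun n => c n • Psi B n 0 ζ with hy
    have hcnonneg : ∀ n, 0 ≤ c n :=
      fun n => Finset.sum_nonneg (fun i _ => le_of_lt (inv_pos.mpr (hxpos i)))
    have hcmono : ∀ n, c n ≤ c k' := by
      intro n
      apply Finset.sum_le_sum_of_subset_of_nonneg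
      · apply Finset.Ioc_subset_Ioc_right
        simp [min_le_right, hk'.le]
      · exact fun i _ _ => le_of_lt (inv_pos.mpr (hxpos i))
    have hwb : ∀ n, ‖w n‖ ≤ 1 := by
      intro n
      simp only [hw]
      split_ifs with h
      · rw [norm_smul, Real.norm_eq_abs, abs_of_pos (inv_pos.mpr (hxpos (n+1)))]
        rw [show ‖Psi B (n+1) 0 ζ‖ = x (n+1) from rfl, inv_mul_cancel₀ (ne_of_gt (hxpos (n+1)))]
      · simp
    have hyrec : ∀ n, y (n+1) = B n (y n) + w n := by
      intro n
      simp only [hy, hw]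
      rw [map_smul, ← psi_succ]
      rcases lt_or_ge n l with h1 | h1
      · have e1 : min (n+1) k' ≤ l := by omega
        have e2 : min n k' ≤ l := by omega
        have hc1 : c (n+1) = 0 := by
          simp only [hc]
          rw [Finset.Ioc_eq_empty (by omega), Finset.sum_empty]
        have hc2 : c n = 0 := by
          simp only [hc]
          rw [Finset.Ioc_eq_empty (by omega), Finset.sum_empty]
        rw [hc1, hc2, if_neg (by omega)]
        simp
      · rcases lt_or_ge n k' with h2 | h2
        · have hc1 : c (n+1) = c n + (x (n+1))⁻¹ := by
            simp only [hc]
            rw [show min (n+1) k' = n+1 by omega, show min n k' = n by omega]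
            exact Finset.sum_Ioc_succ_top h1 _
          rw [hc1, if_pos ⟨h1, h2⟩, add_smul]
        · have hc1 : c (n+1) = c n := by
            simp only [hc]
            rw [show min (n+1) k' = k' by omega, show min n k' = k' by omega]
          rw [hc1, if_neg (by omega)]
          simp
    have hybdd : BddAbove (Set.range fun n => ‖y n‖) := by
      rw [bdd_range_iff]
      refine ⟨c k' * M, fun n => ?_⟩
      simp only [hy]
      rw [norm_smul, Real.norm_eq_abs, abs_of_nonneg (hcnonneg n)]
      exact mul_le_mul (hcmono n) (hM n) (norm_nonneg _) (le_trans (hcnonneg n) (hcmono n))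
    have hy0 : Pr (y 0) = 0 := by
      simp only [hy, hc]
      rw [show min 0 k' = 0 by omega, Finset.Ioc_eq_empty (by omega), Finset.sum_empty]
      simp
    have := hKbound w y 1 hwb hyrec hybdd hy0 k'
    have hyk : ‖y k'‖ = x k' * (∑ i ∈ Finset.Ioc l k', (x i)⁻¹) := by
      simp only [hy, hc]
      rw [norm_smul, Real.norm_eq_abs, min_self,
        abs_of_nonneg (Finset.sum_nonneg (fun i _ => le_of_lt (inv_pos.mpr (hxpos i))))]
      ring
    rw [hyk] at this
    linarith
  have main := scalarL_up x hxpos K hK2 l Hyp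
  have hstep : x (l+1) ≤ NB * x l := by
    have h1 : Psi B (l+1) 0 ζ = B l (Psi B l 0 ζ) := psi_succ B l 0 ζ
    calc x (l+1) = ‖B l (Psi B l 0 ζ)‖ := by rw [show x (l+1) = ‖Psi B (l+1) 0 ζ‖ from rfl, h1]
    _ ≤ ‖((B l : Emm m →L[ℝ] Emm m))‖ * ‖Psi B l 0 ζ‖ := (B l : Emm m →L[ℝ] Emm m).le_opNorm _
    _ ≤ NB * x l := mul_le_mul (hBn l) le_rfl (norm_nonneg _) (by linarith [hBn l, norm_nonneg ((B l : Emm m →L[ℝ] Emm m))])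
  rcases eq_or_lt_of_le hlk with rfl | hlt
  · have : (K/(K+1)) ^ (l-l) = 1 := by rw [Nat.sub_self, pow_zero]
    rw [this, mul_one]
    have h2 : (1:ℝ) ≤ NB * (K+1) := by nlinarith
    nlinarith [hxpos l]
  · obtain ⟨n, hn⟩ : ∃ n : ℕ, k = l + 1 + n := ⟨k - l - 1, by omega⟩
    subst hn
    have h1 := main n
    have h2 : K * (K/(K+1)) ^ n * x (l+1) ≤ K * (K/(K+1)) ^ n * (NB * x l) := by
      apply mul_le_mul_of_nonneg_left hstep
      positivity
    have h3 : K * (K/(K+1)) ^ n * (NB * x l) = (NB * (K+1)) * (K/(K+1)) ^ (l+1+n-l) * x l := by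
      rw [show l+1+n-l = n+1 by omega, pow_succ]
      field_simp
    calc x (l+1+n) ≤ K * (K/(K+1)) ^ n * x (l+1) := h1
    _ ≤ K * (K/(K+1)) ^ n * (NB * x l) := h2
    _ = (NB * (K+1)) * (K/(K+1)) ^ (l+1+n-l) * x l := h3

lemma key_fact (hPrPr : ∀ ξ : Emm m, Pr (Pr ξ) = Pr ξ) (l : ℕ) (v : Emm m) :
    Pr (Psi B 0 l (v - PiMap B Pr l v)) = 0 := by
  rw [map_sub, piMap_apply, psi_psi, psi_self]
  show Pr (Psi B 0 l v - Pr (Psi B 0 l v)) = 0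
  rw [map_sub, hPrPr]
  simp

include hK2 hKbound in
lemma est2 (hPrPr : ∀ ξ : Emm m, Pr (Pr ξ) = Pr ξ) :
    ∀ (l : ℕ) (η : Emm m), Pr (Psi B 0 l η) = 0 → ∀ k : ℕ, k ≤ l →
      ‖Psi B k l η‖ ≤ (K+1) * (K/(K+1)) ^ (l-k) * ‖η‖ := by
  intro l η h0 k hkl
  have hK0 : (0:ℝ) < K := by linarith
  have hKp1 : (0:ℝ) < K + 1 := by linarith
  rcases eq_or_ne η 0 with rfl | hη0
  · simp
  set x : ℕ → ℝ := fun j => ‖Psi B j l η‖ with hx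
  have hxpos : ∀ j, 0 < x j := fun j => psi_norm_pos B j l hη0
  have Hyp : ∀ k', k' < l → x k' * (∑ i ∈ Finset.Ioc k' l, (x i)⁻¹) ≤ K := by
    intro k' hk'
    set w : ℕ → Emm m := fun n =>
      if k' ≤ n ∧ n < l then (-(x (n+1))⁻¹) • Psi B (n+1) l η else 0 with hw
    set d : ℕ → ℝ := fun n => ∑ i ∈ Finset.Ioc (max n k') l, (x i)⁻¹ with hd
    set y : ℕ → Emm m := fun n => d n • Psi B n l η with hy
    have hdnonneg : ∀ n, 0 ≤ d n :=
      fun n => Finset.sum_nonneg (fun i _ => le_of_lt (inv_pos.mpr (hxpos i)))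
    have hwb : ∀ n, ‖w n‖ ≤ 1 := by
      intro n
      simp only [hw]
      split_ifs with h
      · rw [norm_smul, Real.norm_eq_abs, abs_neg, abs_of_pos (inv_pos.mpr (hxpos (n+1)))]
        rw [show ‖Psi B (n+1) l η‖ = x (n+1) from rfl, inv_mul_cancel₀ (ne_of_gt (hxpos (n+1)))]
      · simp
    have hyrec : ∀ n, y (n+1) = B n (y n) + w n := by
      intro n
      simp only [hy, hw]
      rw [map_smul, ← psi_succ]
      rcases lt_or_ge n k' with h1 | h1
      · have hd1 : d (n+1) = d n := by
          simp only [hd]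
          rw [show max (n+1) k' = k' by omega, show max n k' = k' by omega]
        rw [hd1, if_neg (by omega)]
        simp
      · rcases lt_or_ge n l with h2 | h2
        · have hd1 : d n = d (n+1) + (x (n+1))⁻¹ := by
            simp only [hd]
            rw [show max (n+1) k' = n+1 by omega, show max n k' = n by omega]
            rw [show Finset.Ioc n l = insert (n+1) (Finset.Ioc (n+1) l) by
              ext i
              simp only [Finset.mem_Ioc, Finset.mem_insert]
              omega]
            rw [Finset.sum_insert (by simp [Finset.mem_Ioc])]
            ring
          rw [if_pos ⟨h1, h2⟩, hd1, add_smul, neg_smul]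
          abel
        · have hd1 : d (n+1) = d n := by
            simp only [hd]
            rw [Finset.Ioc_eq_empty (by omega), Finset.Ioc_eq_empty (by omega)]
          rw [hd1, if_neg (by omega)]
          simp
    have hybdd : BddAbove (Set.range fun n => ‖y n‖) := by
      apply bddAbove_range_of_eventually (n₀ := l) (M := 0)
      intro n hn
      have hd0 : d n = 0 := by
        simp only [hd]
        rw [Finset.Ioc_eq_empty (by omega), Finset.sum_empty]
      simp only [hy, hd0]
      simp
    have hy0 : Pr (y 0) = 0 := by
      simp only [hy]
      rw [map_smul, h0]
      simp
    have := hKbound w y 1 hwb hyrec hybdd hy0 k'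
    have hyk : ‖y k'‖ = x k' * (∑ i ∈ Finset.Ioc k' l, (x i)⁻¹) := by
      simp only [hy, hd]
      rw [norm_smul, Real.norm_eq_abs, max_self,
        abs_of_nonneg (Finset.sum_nonneg (fun i _ => le_of_lt (inv_pos.mpr (hxpos i))))]
      ring
    rw [hyk] at this
    linarith
  have main := scalarL_down x hxpos K hK2 l Hyp
  rcases eq_or_lt_of_le hkl with rfl | hlt
  · have h1 : (K/(K+1)) ^ (k-k) = 1 := by rw [Nat.sub_self, pow_zero]
    rw [h1, mul_one]
    have h2 : x k = ‖Psi B k k η‖ := rfl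
    rw [psi_self B k] at h2
    have h3 : x k = ‖η‖ := h2
    rw [show ‖Psi B k k η‖ = x k from rfl, h3]
    nlinarith [norm_nonneg η]
  · have h1 := main k hlt
    have hxl : x l = ‖η‖ := by
      show ‖Psi B l l η‖ = ‖η‖
      rw [psi_self B l]
      rfl
    have h2 : K * (K/(K+1)) ^ (l-1-k) * x l = (K+1) * (K/(K+1)) ^ (l-k) * ‖η‖ := by
      rw [hxl, show l-k = (l-1-k)+1 by omega, pow_succ]
      field_simp
    calc ‖Psi B k l η‖ = x k := rfl
    _ ≤ K * (K/(K+1)) ^ (l-1-k) * x l := h1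
    _ = (K+1) * (K/(K+1)) ^ (l-k) * ‖η‖ := h2

include hK2 hKbound in
lemma est3 (hPr2 : ∀ ξ, Pr ξ ∈ StableSet B) (hPrPr : ∀ ξ : Emm m, Pr (Pr ξ) = Pr ξ) :
    ∀ (n : ℕ) (u : Emm m), ‖PiMap B Pr n u‖ ≤ (max K ‖Pr‖) * ‖u‖ := by
  intro n u
  rcases Nat.eq_zero_or_pos n with rfl | hn
  · have h1 : PiMap B Pr 0 u = Pr u := by
      rw [piMap_apply, psi_self]
      simp
    rw [h1]
    calc ‖Pr u‖ ≤ ‖Pr‖ * ‖u‖ := Pr.le_opNorm u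
    _ ≤ (max K ‖Pr‖) * ‖u‖ := mul_le_mul_of_nonneg_right (le_max_right _ _) (norm_nonneg u)
  · set s : Emm m := PiMap B Pr n u with hs
    set r : Emm m := u - s with hr
    have hkey : Pr (Psi B 0 n r) = 0 := key_fact B Pr hPrPr n u
    set ζs : Emm m := Pr (Psi B 0 n u) with hζs
    have hsval : ∀ j, Psi B j n s = Psi B j 0 ζs := by
      intro j
      rw [hs, piMap_apply, psi_psi]
    obtain ⟨Ms, hMs⟩ := bdd_range_iff.mp (hPr2 (Psi B 0 n u))
    set w : ℕ → Emm m := fun j => if j + 1 = n then u else 0 with hw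
    set y : ℕ → Emm m := fun j => if j < n then -(Psi B j n r) else Psi B j n s with hy
    have hwb : ∀ j, ‖w j‖ ≤ ‖u‖ := by
      intro j
      simp only [hw]
      split_ifs
      · exact le_rfl
      · simp
    have hyrec : ∀ j, y (j+1) = B j (y j) + w j := by
      intro j
      simp only [hy, hw]
      rcases lt_trichotomy (j+1) n with h1 | h1 | h1
      · rw [if_pos h1, if_pos (by omega), if_neg (by omega)]
        rw [psi_succ]
        simp
      · rw [if_neg (by omega), if_pos (by omega), if_pos h1]
        have h2 : Psi B (j+1) n s = s := by rw [h1, psi_self]; rfl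
        have h3 : B j (Psi B j n r) = Psi B (j+1) n r := (psi_succ B j n r).symm
        have h4 : Psi B (j+1) n r = r := by rw [h1, psi_self]; rfl
        rw [h2, map_neg, h3, h4, hr]
        abel
      · rw [if_neg (by omega), if_neg (by omega), if_neg (by omega)]
        rw [psi_succ]
        simp
    have hybdd : BddAbove (Set.range fun j => ‖y j‖) := by
      apply bddAbove_range_of_eventually (n₀ := n) (M := Ms)
      intro j hj
      simp only [hy]
      rw [if_neg (by omega), hsval j]
      exact hMs j
    have hy0 : Pr (y 0) = 0 := by
      simp only [hy]
      rw [if_pos hn, map_neg, hkey]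
      simp
    have := hKbound w y ‖u‖ hwb hyrec hybdd hy0 n
    have hyn : y n = s := by
      simp only [hy]
      rw [if_neg (by omega), psi_self]
      rfl
    rw [hyn] at this
    calc ‖PiMap B Pr n u‖ = ‖s‖ := rfl
    _ ≤ K * ‖u‖ := this
    _ ≤ (max K ‖Pr‖) * ‖u‖ := mul_le_mul_of_nonneg_right (le_max_left _ _) (norm_nonneg u)


end Estimates
section HalfLineMain

variable {m : ℕ}

lemma psi_self_apply (B : ℕ → (Emm m ≃L[ℝ] Emm m)) (n : ℕ) (v : Emm m) :
    Psi B n n v = v := by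
  rw [psi_self]
  simp

theorem halfline_dichotomy (B : ℕ → (Emm m ≃L[ℝ] Emm m)) (NB : ℝ) (hNB : 1 ≤ NB)
    (hBn : ∀ n, ‖((B n : Emm m →L[ℝ] Emm m))‖ ≤ NB)
    (hsolve : ∀ w : ℕ → Emm m, BddAbove (Set.range fun n => ‖w n‖) →
      ∃ v : ℕ → Emm m, BddAbove (Set.range fun n => ‖v n‖) ∧ ∀ n, v (n+1) = B n (v n) + w n) :
    ∃ (C lam : ℝ) (Pi : ℕ → (Emm m →L[ℝ] Emm m)), 0 < C ∧ lam ∈ Set.Ioo (0:ℝ) 1 ∧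
      (∀ n, (Pi n).comp (Pi n) = Pi n) ∧
      (∀ n l, (Pi n).comp (Psi B n l) = (Psi B n l).comp (Pi l)) ∧
      (∀ l k, l ≤ k → ∀ v, ‖Psi B k l (Pi l v)‖ ≤ C * lam ^ (k-l) * ‖v‖) ∧
      (∀ k l, k ≤ l → ∀ v, ‖Psi B k l (v - Pi l v)‖ ≤ C * lam ^ (l-k) * ‖v‖) ∧
      (∀ ξ, BddAbove (Set.range fun n => ‖Psi B n 0 ξ‖) ↔ Pi 0 ξ = ξ) := by
  obtain ⟨Pr, hPr1, hPr2, hPr3⟩ := exists_proj B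
  have hPrPr : ∀ ξ : Emm m, Pr (Pr ξ) = Pr ξ := by
    intro ξ
    have := congrArg (fun (T : Emm m →L[ℝ] Emm m) => T ξ) hPr3
    simpa using this
  obtain ⟨K, hK2, hKbound⟩ := exists_uniform_bound B hsolve Pr hPr1 hPr2 hPr3
  have hK0 : (0:ℝ) < K := by linarith
  have hKp1 : (0:ℝ) < K + 1 := by linarith
  set Kp : ℝ := max K ‖Pr‖ with hKp
  have hKpK : K ≤ Kp := le_max_left _ _
  have hKp0 : (0:ℝ) < Kp := by linarith
  set lam : ℝ := K/(K+1) with hlam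
  have hlam0 : 0 < lam := by positivity
  have hlam1 : lam < 1 := by
    rw [hlam, div_lt_one hKp1]
    linarith
  set C : ℝ := NB*(K+1)*Kp + (K+1)*(1+Kp) + 1 with hC
  have hC0 : 0 < C := by
    have h1 : 0 ≤ NB*(K+1)*Kp := by positivity
    have h2 : 0 ≤ (K+1)*(1+Kp) := by positivity
    linarith
  refine ⟨C, lam, PiMap B Pr, hC0, ⟨hlam0, hlam1⟩, ?_, ?_, ?_, ?_, ?_⟩
  · -- idempotent
    intro n
    apply ContinuousLinearMap.ext
    intro u
    show PiMap B Pr n (PiMap B Pr n u) = PiMap B Pr n u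
    simp only [piMap_apply]
    rw [psi_psi B 0 n 0, psi_self_apply, hPrPr]
  · -- commute
    intro n l
    apply ContinuousLinearMap.ext
    intro u
    show PiMap B Pr n (Psi B n l u) = Psi B n l (PiMap B Pr l u)
    simp only [piMap_apply]
    rw [psi_psi B 0 n l, psi_psi B n l 0]
  · -- stable decay
    intro l k hlk v
    set ζ : Emm m := Pr (Psi B 0 l v) with hζ
    have h1 : Psi B k l (PiMap B Pr l v) = Psi B k 0 ζ := by
      rw [piMap_apply, psi_psi B k l 0]
    have h2 := est1 B NB Pr K hK2 hKbound hNB hBn ζ (hPr2 _) l k hlk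
    have h3 : ‖Psi B l 0 ζ‖ = ‖PiMap B Pr l v‖ := by rw [piMap_apply]
    have h4 : ‖PiMap B Pr l v‖ ≤ Kp * ‖v‖ := est3 B Pr K hK2 hKbound hPr2 hPrPr l v
    have h5 : (0:ℝ) ≤ (NB * (K+1)) * lam ^ (k-l) := by positivity
    calc ‖Psi B k l (PiMap B Pr l v)‖ = ‖Psi B k 0 ζ‖ := by rw [h1]
    _ ≤ (NB * (K+1)) * lam ^ (k-l) * ‖Psi B l 0 ζ‖ := h2
    _ = (NB * (K+1)) * lam ^ (k-l) * ‖PiMap B Pr l v‖ := by rw [h3]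
    _ ≤ (NB * (K+1)) * lam ^ (k-l) * (Kp * ‖v‖) := mul_le_mul_of_nonneg_left h4 h5
    _ = (NB * (K+1) * Kp) * lam ^ (k-l) * ‖v‖ := by ring
    _ ≤ C * lam ^ (k-l) * ‖v‖ := by
        apply mul_le_mul_of_nonneg_right ?_ (norm_nonneg v)
        apply mul_le_mul_of_nonneg_right ?_ (le_of_lt (pow_pos hlam0 _))
        rw [hC]
        have h6 : 0 ≤ (K+1)*(1+Kp) := by positivity
        linarith
  · -- unstable growth
    intro k l hkl v
    set η : Emm m := v - PiMap B Pr l v with hη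
    have h0 : Pr (Psi B 0 l η) = 0 := key_fact B Pr hPrPr l v
    have h2 := est2 B Pr K hK2 hKbound hPrPr l η h0 k hkl
    have h3 : ‖η‖ ≤ (1 + Kp) * ‖v‖ := by
      rw [hη]
      calc ‖v - PiMap B Pr l v‖ ≤ ‖v‖ + ‖PiMap B Pr l v‖ := norm_sub_le _ _
      _ ≤ ‖v‖ + Kp * ‖v‖ := by linarith [est3 B Pr K hK2 hKbound hPr2 hPrPr l v]
      _ = (1 + Kp) * ‖v‖ := by ring
    have h5 : (0:ℝ) ≤ (K+1) * lam ^ (l-k) := by positivity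
    calc ‖Psi B k l η‖ ≤ (K+1) * lam ^ (l-k) * ‖η‖ := h2
    _ ≤ (K+1) * lam ^ (l-k) * ((1+Kp) * ‖v‖) := mul_le_mul_of_nonneg_left h3 h5
    _ = ((K+1) * (1+Kp)) * lam ^ (l-k) * ‖v‖ := by ring
    _ ≤ C * lam ^ (l-k) * ‖v‖ := by
        apply mul_le_mul_of_nonneg_right ?_ (norm_nonneg v)
        apply mul_le_mul_of_nonneg_right ?_ (le_of_lt (pow_pos hlam0 _))
        rw [hC]
        have h6 : 0 ≤ NB*(K+1)*Kp := by positivity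
        linarith
  · -- characterization
    intro ξ
    constructor
    · intro hξ
      show Psi B 0 0 (Pr (Psi B 0 0 ξ)) = ξ
      rw [psi_self_apply, psi_self_apply]
      exact hPr1 ξ hξ
    · intro hξ
      have h1 : PiMap B Pr 0 ξ = Pr ξ := by
        simp only [piMap_apply]
        rw [psi_self_apply, psi_self_apply]
      rw [h1] at hξ
      have := hPr2 ξ
      rw [hξ] at this
      exact this

end HalfLineMain
section Forward

variable {m : ℕ} (A : ℤ → (Emm m ≃L[ℝ] Emm m))

lemma solve_plus
    (hyp : ∀ w : ℤ → Emm m, (∃ C : ℝ, ∀ k : ℤ, ‖w k‖ ≤ C) →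
      ∃ v : ℤ → Emm m, (∃ C : ℝ, ∀ k : ℤ, ‖v k‖ ≤ C) ∧
        ∀ k : ℤ, v (k + 1) = A k (v k) + w k) :
    ∀ w : ℕ → Emm m, BddAbove (Set.range fun n => ‖w n‖) →
      ∃ v : ℕ → Emm m, BddAbove (Set.range fun n => ‖v n‖) ∧
        ∀ n, v (n+1) = Bplusseq A n (v n) + w n := by
  intro w hw
  obtain ⟨M, hM⟩ := bdd_range_iff.mp hw
  set wz : ℤ → Emm m := fun k => if 0 ≤ k then w k.toNat else 0 with hwz
  obtain ⟨v, ⟨Cv, hCv⟩, hrec⟩ := hyp wz ⟨max M 0, by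
    intro k
    simp only [hwz]
    split_ifs
    · exact le_trans (hM _) (le_max_left _ _)
    · simp⟩
  refine ⟨fun n => v (n : ℤ), bdd_range_iff.mpr ⟨Cv, fun n => hCv _⟩, ?_⟩
  intro n
  have h1 := hrec (n : ℤ)
  have h2 : ((n : ℤ) + 1) = ((n + 1 : ℕ) : ℤ) := by push_cast; ring
  rw [h2] at h1
  show v (((n+1:ℕ)):ℤ) = Bplusseq A n (v ((n:ℕ):ℤ)) + w n
  rw [h1]
  simp only [hwz, if_pos (Int.natCast_nonneg n), Int.toNat_natCast]
  rfl

lemma solve_minus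
    (hyp : ∀ w : ℤ → Emm m, (∃ C : ℝ, ∀ k : ℤ, ‖w k‖ ≤ C) →
      ∃ v : ℤ → Emm m, (∃ C : ℝ, ∀ k : ℤ, ‖v k‖ ≤ C) ∧
        ∀ k : ℤ, v (k + 1) = A k (v k) + w k)
    (N : ℝ) (hA : ∀ k : ℤ, ‖((A k : Emm m →L[ℝ] Emm m))‖ ≤ N) :
    ∀ w : ℕ → Emm m, BddAbove (Set.range fun n => ‖w n‖) →
      ∃ v : ℕ → Emm m, BddAbove (Set.range fun n => ‖v n‖) ∧
        ∀ n, v (n+1) = Bminusseq A n (v n) + w n := by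
  intro w hw
  obtain ⟨M, hM⟩ := bdd_range_iff.mp hw
  have hM0 : 0 ≤ M := le_trans (norm_nonneg _) (hM 0)
  have hN0 : 0 ≤ N := le_trans (norm_nonneg _) (hA 0)
  set wz : ℤ → Emm m := fun k => if k < 0 then -(A k (w (-1-k).toNat)) else 0 with hwz
  obtain ⟨v, ⟨Cv, hCv⟩, hrec⟩ := hyp wz ⟨N * M, by
    intro k
    simp only [hwz]
    split_ifs
    · rw [norm_neg]
      calc ‖A k (w (-1-k).toNat)‖ ≤ ‖((A k : Emm m →L[ℝ] Emm m))‖ * ‖w (-1-k).toNat‖ :=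
          (A k : Emm m →L[ℝ] Emm m).le_opNorm _
      _ ≤ N * M := mul_le_mul (hA k) (hM _) (norm_nonneg _) hN0
    · simp only [norm_zero]
      exact mul_nonneg hN0 hM0⟩
  refine ⟨fun n => v (-(n : ℤ)), bdd_range_iff.mpr ⟨Cv, fun n => hCv _⟩, ?_⟩
  intro n
  have h1 := hrec (-1 - (n : ℤ))
  rw [show (-1 - (n : ℤ) + 1) = -(n:ℤ) by ring] at h1
  have hw1 : wz (-1 - (n:ℤ)) = -(A (-1-(n:ℤ)) (w n)) := by
    simp only [hwz, if_pos (by omega : (-1 - (n:ℤ)) < 0)]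
    rw [show (-1 - (-1 - (n:ℤ))).toNat = n by omega]
  rw [hw1] at h1
  show v (-((n:ℤ)+1)) = (A (-1-(n:ℤ))).symm (v (-(n:ℤ))) + w n
  rw [show -((n:ℤ)+1) = -1 - (n:ℤ) by ring]
  have h2 : A (-1-(n:ℤ)) (v (-1 - (n:ℤ))) = v (-(n:ℤ)) + A (-1-(n:ℤ)) (w n) := by
    rw [h1]; abel
  have h3 : v (-1 - (n:ℤ)) = (A (-1-(n:ℤ))).symm (v (-(n:ℤ)) + A (-1-(n:ℤ)) (w n)) := by
    rw [← h2, ContinuousLinearEquiv.symm_apply_apply]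
  rw [h3, map_add, ContinuousLinearEquiv.symm_apply_apply]

end Forward
section ForwardMain

variable {m : ℕ}

lemma one_sub_idem (P : Emm m →L[ℝ] Emm m) (h : P.comp P = P) :
    ((1 : Emm m →L[ℝ] Emm m) - P).comp (1 - P) = 1 - P := by
  apply ContinuousLinearMap.ext
  intro v
  have hv : P (P v) = P v := by
    have := congrArg (fun (T : Emm m →L[ℝ] Emm m) => T v) h
    simpa using this
  simp only [ContinuousLinearMap.comp_apply, ContinuousLinearMap.sub_apply,
    ContinuousLinearMap.one_apply, map_sub, hv]
  abel

lemma one_sub_commute (P Q T : Emm m →L[ℝ] Emm m) (h : P.comp T = T.comp Q) :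
    ((1 : Emm m →L[ℝ] Emm m) - P).comp T = T.comp (1 - Q) := by
  apply ContinuousLinearMap.ext
  intro v
  have hv : P (T v) = T (Q v) := by
    have := congrArg (fun (S : Emm m →L[ℝ] Emm m) => S v) h
    simpa using this
  simp only [ContinuousLinearMap.comp_apply, ContinuousLinearMap.sub_apply,
    ContinuousLinearMap.one_apply, map_sub, hv]

lemma tendsto_toNat_atTop : Filter.Tendsto (fun k : ℤ => k.toNat) Filter.atTop Filter.atTop := by
  apply Filter.tendsto_atTop_atTop.mpr
  intro b
  exact ⟨(b : ℤ), fun k hk => by omega⟩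

lemma tendsto_neg_toNat_atBot :
    Filter.Tendsto (fun k : ℤ => (-k).toNat) Filter.atBot Filter.atTop := by
  apply Filter.tendsto_atBot_atTop.mpr
  intro b
  exact ⟨-(b : ℤ), fun k hk => by omega⟩

theorem forward_direction (A : ℤ → (Emm m ≃L[ℝ] Emm m)) (N : ℝ) (hN : 0 < N)
    (hA : ∀ k : ℤ, ‖((A k : Emm m →L[ℝ] Emm m))‖ ≤ N)
    (hAinv : ∀ k : ℤ, ‖(((A k).symm : Emm m →L[ℝ] Emm m))‖ ≤ N)
    (hyp : ∀ w : ℤ → Emm m, (∃ C : ℝ, ∀ k : ℤ, ‖w k‖ ≤ C) →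
      ∃ v : ℤ → Emm m, (∃ C : ℝ, ∀ k : ℤ, ‖v k‖ ≤ C) ∧
        ∀ k : ℤ, v (k + 1) = A k (v k) + w k) :
    HyperbolicOnPlusRay A ∧ HyperbolicOnMinusRay A ∧
      ∀ u : Emm m, ∃ x ∈ Bplus A, ∃ y ∈ Bminus A, u = x + y := by
  set NB : ℝ := max N 1 with hNBdef
  have hNB : 1 ≤ NB := le_max_right _ _
  have hBnp : ∀ n, ‖((Bplusseq A n : Emm m →L[ℝ] Emm m))‖ ≤ NB :=
    fun n => le_trans (hA _) (le_max_left _ _)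
  have hBnm : ∀ n, ‖((Bminusseq A n : Emm m →L[ℝ] Emm m))‖ ≤ NB :=
    fun n => le_trans (hAinv _) (le_max_left _ _)
  obtain ⟨Cp, lamp, Pip, hCp, hlamp, hidemp, hcommp, hest5p, hest6p, hcharp⟩ :=
    halfline_dichotomy (Bplusseq A) NB hNB hBnp (solve_plus A hyp)
  obtain ⟨Cm, lamm, Pim, hCm, hlamm, hidemm, hcommm, hest5m, hest6m, hcharm⟩ :=
    halfline_dichotomy (Bminusseq A) NB hNB hBnm (solve_minus A hyp N hA)
  refine ⟨⟨Cp, lamp, fun k => Pip k.toNat, hCp, hlamp, ?_, ?_, ?_, ?_⟩,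
          ⟨Cm, lamm, fun k => 1 - Pim (-k).toNat, hCm, hlamm, ?_, ?_, ?_, ?_⟩, ?_⟩
  · intro k _
    exact hidemp k.toNat
  · intro k l hk hl
    rw [dict_plus A k l hk hl]
    exact hcommp k.toNat l.toNat
  · intro k l hl hlk v
    rw [dict_plus A k l (le_trans hl hlk) hl,
      show (k - l).toNat = k.toNat - l.toNat by omega]
    exact hest5p l.toNat k.toNat (by omega) v
  · intro k l hk hkl v
    have hl : 0 ≤ l := le_trans hk hkl
    have hsub : ((1 : Emm m →L[ℝ] Emm m) - Pip l.toNat) v = v - Pip l.toNat v := by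
      simp [ContinuousLinearMap.sub_apply]
    rw [dict_plus A k l hk hl, hsub, show (l - k).toNat = l.toNat - k.toNat by omega]
    exact hest6p k.toNat l.toNat (by omega) v
  · intro k _
    exact one_sub_idem _ (hidemm (-k).toNat)
  · intro k l hk hl
    rw [dict_minus A k l hk hl]
    exact one_sub_commute _ _ _ (hcommm (-k).toNat (-l).toNat)
  · intro k l hlk hk v
    have hl : l ≤ 0 := le_trans hlk hk
    have hsub : ((1 : Emm m →L[ℝ] Emm m) - Pim (-l).toNat) v = v - Pim (-l).toNat v := by
      simp [ContinuousLinearMap.sub_apply]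
    rw [dict_minus A k l hk hl, hsub, show (k - l).toNat = (-l).toNat - (-k).toNat by omega]
    exact hest6m (-k).toNat (-l).toNat (by omega) v
  · intro k l hkl hl v
    have hk : k ≤ 0 := le_trans hkl hl
    have hsub : ((1 : Emm m →L[ℝ] Emm m) - ((1 : Emm m →L[ℝ] Emm m) - Pim (-l).toNat)) v
        = Pim (-l).toNat v := by
      simp [ContinuousLinearMap.sub_apply]
    rw [dict_minus A k l hk hl, hsub, show (l - k).toNat = (-k).toNat - (-l).toNat by omega]
    exact hest5m (-l).toNat (-k).toNat (by omega) v
  · -- transversality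
    intro u
    set wtr : ℤ → Emm m := fun k => if k = -1 then u else 0 with hwtr
    obtain ⟨v, ⟨Cv, hCv⟩, hrec⟩ := hyp wtr ⟨‖u‖, by
      intro k
      simp only [hwtr]
      split_ifs
      · exact le_rfl
      · simp⟩
    -- x := v 0 is in Bplus
    set x : Emm m := v 0 with hx
    have hxval : ∀ n : ℕ, Psi (Bplusseq A) n 0 x = v (n : ℤ) := by
      intro n
      induction n with
      | zero => rw [psi_self_apply]; rfl
      | succ n ih =>
        rw [psi_succ, ih]
        show A (n : ℤ) (v (n:ℤ)) = v ((n+1 : ℕ) : ℤ)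
        have h1 := hrec (n : ℤ)
        have h2 : wtr (n : ℤ) = 0 := by
          simp only [hwtr]
          rw [if_neg (by omega)]
        rw [h2] at h1
        rw [show ((n+1 : ℕ) : ℤ) = (n : ℤ) + 1 by push_cast; ring, h1]
        simp
    have hxbdd : BddAbove (Set.range fun n => ‖Psi (Bplusseq A) n 0 x‖) :=
      bdd_range_iff.mpr ⟨Cv, fun n => by rw [hxval]; exact hCv _⟩
    have hxfix := (hcharp x).mp hxbdd
    have hxdecay : ∀ n : ℕ, ‖Psi (Bplusseq A) n 0 x‖ ≤ Cp * lamp ^ n * ‖x‖ := by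
      intro n
      have h1 := hest5p 0 n (Nat.zero_le n) x
      rw [hxfix] at h1
      simpa using h1
    have hxmem : x ∈ Bplus A := by
      show Filter.Tendsto (fun k : ℤ => ‖Phi A k 0 x‖) Filter.atTop (nhds 0)
      apply squeeze_zero' (Filter.Eventually.of_forall (fun k => norm_nonneg _))
        (g := fun k : ℤ => Cp * lamp ^ (k.toNat) * ‖x‖)
      · refine Filter.Eventually.mono (Filter.eventually_ge_atTop 0) (fun k hk => ?_)
        rw [dict_plus A k 0 hk le_rfl]
        simpa using hxdecay k.toNat
      · have h0 : Filter.Tendsto (fun n : ℕ => lamp ^ n) Filter.atTop (nhds 0) :=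
          tendsto_pow_atTop_nhds_zero_of_lt_one hlamp.1.le hlamp.2
        have h1 := ((h0.comp tendsto_toNat_atTop).const_mul Cp).mul_const ‖x‖
        simpa using h1
    -- y0 := A (-1) (v (-1))
    set y0 : Emm m := A (-1) (v (-1)) with hy0
    have hyval : ∀ n : ℕ, Psi (Bminusseq A) (n+1) 0 y0 = v (-((n:ℤ)+1)) := by
      intro n
      induction n with
      | zero =>
        rw [psi_succ, psi_self_apply]
        show (A (-1 - (0:ℤ))).symm y0 = v (-(0+1))
        rw [show (-1 - (0:ℤ)) = -1 by ring, hy0, ContinuousLinearEquiv.symm_apply_apply]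
        norm_num
      | succ n ih =>
        rw [psi_succ, ih]
        show (A (-1 - ((n:ℤ)+1))).symm (v (-((n:ℤ)+1))) = v (-(((n:ℤ)+1)+1))
        have h1 := hrec (-((n:ℤ)+2))
        have h2 : wtr (-((n:ℤ)+2)) = 0 := by
          simp only [hwtr]
          rw [if_neg (by omega)]
        rw [h2, add_zero] at h1
        rw [show (-((n:ℤ)+2) + 1) = -((n:ℤ)+1) by ring] at h1
        rw [show (-1 - ((n:ℤ)+1)) = -((n:ℤ)+2) by ring, h1,
          ContinuousLinearEquiv.symm_apply_apply,
          show (-(((n:ℤ)+1)+1)) = -((n:ℤ)+2) by ring]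
    have hybdd : BddAbove (Set.range fun n => ‖Psi (Bminusseq A) n 0 y0‖) := by
      apply bddAbove_range_of_eventually (n₀ := 1) (M := Cv)
      intro n hn
      obtain ⟨j, rfl⟩ : ∃ j, n = j + 1 := ⟨n - 1, by omega⟩
      rw [hyval]
      exact hCv _
    have hyfix := (hcharm y0).mp hybdd
    have hydecay : ∀ n : ℕ, ‖Psi (Bminusseq A) n 0 y0‖ ≤ Cm * lamm ^ n * ‖y0‖ := by
      intro n
      have h1 := hest5m 0 n (Nat.zero_le n) y0
      rw [hyfix] at h1
      simpa using h1
    have hymem : Filter.Tendsto (fun k : ℤ => ‖Phi A k 0 y0‖) Filter.atBot (nhds 0) := by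
      apply squeeze_zero' (Filter.Eventually.of_forall (fun k => norm_nonneg _))
        (g := fun k : ℤ => Cm * lamm ^ ((-k).toNat) * ‖y0‖)
      · refine Filter.Eventually.mono (Filter.eventually_le_atBot 0) (fun k hk => ?_)
        rw [dict_minus A k 0 hk le_rfl]
        simpa using hydecay (-k).toNat
      · have h0 : Filter.Tendsto (fun n : ℕ => lamm ^ n) Filter.atTop (nhds 0) :=
          tendsto_pow_atTop_nhds_zero_of_lt_one hlamm.1.le hlamm.2
        have h1 := ((h0.comp tendsto_neg_toNat_atBot).const_mul Cm).mul_const ‖y0‖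
        simpa using h1
    have hymem' : (-y0) ∈ Bminus A := by
      show Filter.Tendsto (fun k : ℤ => ‖Phi A k 0 (-y0)‖) Filter.atBot (nhds 0)
      simpa [map_neg] using hymem
    refine ⟨x, hxmem, -y0, hymem', ?_⟩
    have h1 := hrec (-1)
    rw [show (-1 + 1 : ℤ) = 0 by ring] at h1
    have h2 : wtr (-1) = u := by simp [hwtr]
    rw [h2] at h1
    rw [hx, h1, hy0]
    abel

end ForwardMain
section BackwardPlus

variable {m : ℕ}

lemma geom_partial_le (r : ℝ) (h0 : 0 ≤ r) (h1 : r < 1) (K : ℕ) :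
    ∑ j ∈ Finset.range K, r^j ≤ (1-r)⁻¹ := by
  have hs := summable_geometric_of_lt_one h0 h1
  calc ∑ j ∈ Finset.range K, r^j ≤ ∑' j : ℕ, r^j :=
      Summable.sum_le_tsum _ (fun i _ => pow_nonneg h0 i) hs
  _ = (1-r)⁻¹ := tsum_geometric_of_lt_one h0 h1

lemma plus_solution (A : ℤ → (Emm m ≃L[ℝ] Emm m))
    (Cp lamp : ℝ) (P : ℤ → (Emm m →L[ℝ] Emm m))
    (hCp0 : 0 < Cp) (hlamp : lamp ∈ Set.Ioo (0:ℝ) 1)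
    (hP3 : ∀ k l : ℤ, 0 ≤ l → l ≤ k → ∀ v : Emm m,
      ‖Phi A k l (P l v)‖ ≤ Cp * lamp ^ (k - l).toNat * ‖v‖)
    (hP4 : ∀ k l : ℤ, 0 ≤ k → k ≤ l → ∀ v : Emm m,
      ‖Phi A k l ((1 - P l) v)‖ ≤ Cp * lamp ^ (l - k).toNat * ‖v‖)
    (w : ℤ → Emm m) (W : ℝ) (hW0 : 0 ≤ W) (hW : ∀ k, ‖w k‖ ≤ W) :
    ∃ vp : ℤ → Emm m,
      (∀ k, 0 ≤ k → ‖vp k‖ ≤ Cp*W*(1-lamp)⁻¹ + Cp*W*lamp*(1-lamp)⁻¹) ∧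
      (∀ k, 0 ≤ k → vp (k+1) = A k (vp k) + w k) := by
  obtain ⟨hlam0, hlam1⟩ := hlamp
  set fp : ℤ → ℕ → Emm m :=
    fun k n => Phi A k (k+(n:ℤ)+1) ((1 - P (k+(n:ℤ)+1)) (w (k+(n:ℤ)))) with hfp
  have hgeom : Summable (fun n : ℕ => (Cp*W*lamp) * lamp^n) :=
    (summable_geometric_of_lt_one hlam0.le hlam1).mul_left _
  have hfp_bound : ∀ k : ℤ, 0 ≤ k → ∀ n : ℕ, ‖fp k n‖ ≤ (Cp*W*lamp) * lamp^n := by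
    intro k hk n
    have h1 := hP4 k (k+(n:ℤ)+1) hk (by omega) (w (k+(n:ℤ)))
    rw [show (k+(n:ℤ)+1-k).toNat = n+1 by omega] at h1
    calc ‖fp k n‖ ≤ Cp * lamp^(n+1) * ‖w (k+(n:ℤ))‖ := h1
    _ ≤ Cp * lamp^(n+1) * W := by
        apply mul_le_mul_of_nonneg_left (hW _)
        positivity
    _ = (Cp*W*lamp) * lamp^n := by rw [pow_succ]; ring
  have hfp_sum : ∀ k : ℤ, 0 ≤ k → Summable (fp k) :=
    fun k hk => Summable.of_norm_bounded hgeom (hfp_bound k hk)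
  have hfp_normsum : ∀ k : ℤ, 0 ≤ k → Summable (fun n => ‖fp k n‖) :=
    fun k hk => Summable.of_nonneg_of_le (fun n => norm_nonneg _) (hfp_bound k hk) hgeom
  set vp : ℤ → Emm m := fun k =>
    (∑ n ∈ Finset.range k.toNat, Phi A k ((n:ℤ)+1) (P ((n:ℤ)+1) (w (n:ℤ)))) - ∑' n, fp k n
    with hvp
  refine ⟨vp, ?_, ?_⟩
  · -- bound
    intro k hk
    have hfin : ‖∑ n ∈ Finset.range k.toNat, Phi A k ((n:ℤ)+1) (P ((n:ℤ)+1) (w (n:ℤ)))‖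
        ≤ Cp*W*(1-lamp)⁻¹ := by
      calc ‖∑ n ∈ Finset.range k.toNat, Phi A k ((n:ℤ)+1) (P ((n:ℤ)+1) (w (n:ℤ)))‖
          ≤ ∑ n ∈ Finset.range k.toNat, ‖Phi A k ((n:ℤ)+1) (P ((n:ℤ)+1) (w (n:ℤ)))‖ :=
            norm_sum_le _ _
      _ ≤ ∑ n ∈ Finset.range k.toNat, (Cp*W) * lamp^(k.toNat-1-n) := by
          apply Finset.sum_le_sum
          intro n hn
          rw [Finset.mem_range] at hn
          have h1 := hP3 k ((n:ℤ)+1) (by omega) (by omega) (w (n:ℤ))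
          rw [show (k-((n:ℤ)+1)).toNat = k.toNat-1-n by omega] at h1
          calc ‖Phi A k ((n:ℤ)+1) (P ((n:ℤ)+1) (w (n:ℤ)))‖
              ≤ Cp * lamp^(k.toNat-1-n) * ‖w (n:ℤ)‖ := h1
          _ ≤ Cp * lamp^(k.toNat-1-n) * W := by
              apply mul_le_mul_of_nonneg_left (hW _)
              positivity
          _ = (Cp*W) * lamp^(k.toNat-1-n) := by ring
      _ = (Cp*W) * ∑ n ∈ Finset.range k.toNat, lamp^(k.toNat-1-n) := by
          rw [Finset.mul_sum]
      _ = (Cp*W) * ∑ n ∈ Finset.range k.toNat, lamp^n := by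
          rw [Finset.sum_range_reflect (fun j => lamp^j) k.toNat]
      _ ≤ (Cp*W) * (1-lamp)⁻¹ := by
          apply mul_le_mul_of_nonneg_left (geom_partial_le lamp hlam0.le hlam1 k.toNat)
          positivity
    have htail : ‖∑' n, fp k n‖ ≤ Cp*W*lamp*(1-lamp)⁻¹ := by
      calc ‖∑' n, fp k n‖ ≤ ∑' n, ‖fp k n‖ := norm_tsum_le_tsum_norm (hfp_normsum k hk)
      _ ≤ ∑' n : ℕ, (Cp*W*lamp) * lamp^n :=
          Summable.tsum_le_tsum (hfp_bound k hk) (hfp_normsum k hk) hgeom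
      _ = (Cp*W*lamp) * ∑' n : ℕ, lamp^n := tsum_mul_left
      _ = Cp*W*lamp*(1-lamp)⁻¹ := by rw [tsum_geometric_of_lt_one hlam0.le hlam1]
    calc ‖vp k‖ ≤ ‖∑ n ∈ Finset.range k.toNat, Phi A k ((n:ℤ)+1) (P ((n:ℤ)+1) (w (n:ℤ)))‖
        + ‖∑' n, fp k n‖ := norm_sub_le _ _
    _ ≤ Cp*W*(1-lamp)⁻¹ + Cp*W*lamp*(1-lamp)⁻¹ := add_le_add hfin htail
  · -- recurrence
    intro k hk
    have hAfin : A k (∑ n ∈ Finset.range k.toNat, Phi A k ((n:ℤ)+1) (P ((n:ℤ)+1) (w (n:ℤ))))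
        = ∑ n ∈ Finset.range k.toNat, Phi A (k+1) ((n:ℤ)+1) (P ((n:ℤ)+1) (w (n:ℤ))) := by
      rw [map_sum]
      apply Finset.sum_congr rfl
      intro n _
      rw [phi_succ_apply]
    have hg_def : ∀ n : ℕ, A k (fp k n) = Phi A (k+1) (k+(n:ℤ)+1) ((1 - P (k+(n:ℤ)+1)) (w (k+(n:ℤ)))) := by
      intro n
      rw [hfp]
      rw [phi_succ_apply]
    set g : ℕ → Emm m :=
      fun n => Phi A (k+1) (k+(n:ℤ)+1) ((1 - P (k+(n:ℤ)+1)) (w (k+(n:ℤ)))) with hg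
    have hg_bound : ∀ n : ℕ, ‖g n‖ ≤ (Cp*W) * lamp^n := by
      intro n
      have h1 := hP4 (k+1) (k+(n:ℤ)+1) (by omega) (by omega) (w (k+(n:ℤ)))
      rw [show (k+(n:ℤ)+1-(k+1)).toNat = n by omega] at h1
      calc ‖g n‖ ≤ Cp * lamp^n * ‖w (k+(n:ℤ))‖ := h1
      _ ≤ Cp * lamp^n * W := by
          apply mul_le_mul_of_nonneg_left (hW _)
          positivity
      _ = (Cp*W) * lamp^n := by ring
    have hg_sum : Summable g :=
      Summable.of_norm_bounded ((summable_geometric_of_lt_one hlam0.le hlam1).mul_left _)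
        hg_bound
    have hAtail : A k (∑' n, fp k n) = ∑' n, g n := by
      have h1 : (A k : Emm m →L[ℝ] Emm m) (∑' n, fp k n) = ∑' n, (A k : Emm m →L[ℝ] Emm m) (fp k n) :=
        ContinuousLinearMap.map_tsum _ (hfp_sum k hk)
      calc A k (∑' n, fp k n) = (A k : Emm m →L[ℝ] Emm m) (∑' n, fp k n) := rfl
      _ = ∑' n, (A k : Emm m →L[ℝ] Emm m) (fp k n) := h1
      _ = ∑' n, g n := by
          apply tsum_congr
          intro n
          exact hg_def n
    have hg_split : ∑' n, g n = g 0 + ∑' n, g (n+1) := Summable.tsum_eq_zero_add hg_sum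
    have hg_shift : ∀ n : ℕ, g (n+1) = fp (k+1) n := by
      intro n
      rw [hg, hfp]
      have e1 : k + ((n:ℤ)+1) + 1 = (k+1) + (n:ℤ) + 1 := by push_cast; ring
      have e2 : k + ((n:ℤ)+1) = (k+1) + (n:ℤ) := by push_cast; ring
      simp only []
      rw [show (((n+1:ℕ)):ℤ) = (n:ℤ)+1 by push_cast; ring, e1, e2]
    have hg0 : g 0 = (1 - P (k+1)) (w k) := by
      rw [hg]
      simp only []
      rw [show k + ((0:ℕ):ℤ) + 1 = k+1 by push_cast; ring,
        show k + ((0:ℕ):ℤ) = k by push_cast; ring, phi_self_apply]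
    have hfin_succ : ∑ n ∈ Finset.range (k+1).toNat, Phi A (k+1) ((n:ℤ)+1) (P ((n:ℤ)+1) (w (n:ℤ)))
        = (∑ n ∈ Finset.range k.toNat, Phi A (k+1) ((n:ℤ)+1) (P ((n:ℤ)+1) (w (n:ℤ))))
          + P (k+1) (w k) := by
      rw [show (k+1).toNat = k.toNat + 1 by omega, Finset.sum_range_succ]
      congr 1
      rw [show ((k.toNat:ℕ):ℤ) = k by omega]
      rw [phi_self_apply]
    have htsum_succ : ∑' n, fp (k+1) n = ∑' n, g (n+1) := by
      apply tsum_congr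
      intro n
      rw [hg_shift n]
    show (∑ n ∈ Finset.range (k+1).toNat, Phi A (k+1) ((n:ℤ)+1) (P ((n:ℤ)+1) (w (n:ℤ))))
        - ∑' n, fp (k+1) n = A k (vp k) + w k
    rw [hfin_succ, htsum_succ, hvp]
    simp only [map_sub]
    rw [hAfin, hAtail, hg_split, hg0]
    have hsub : ((1 : Emm m →L[ℝ] Emm m) - P (k+1)) (w k) = w k - P (k+1) (w k) := by
      simp [ContinuousLinearMap.sub_apply]
    rw [hsub]
    abel

end BackwardPlus
section BackwardMinus

variable {m : ℕ}

lemma minus_solution (A : ℤ → (Emm m ≃L[ℝ] Emm m))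
    (Cq lamq : ℝ) (Q : ℤ → (Emm m →L[ℝ] Emm m))
    (hCq0 : 0 < Cq) (hlamq : lamq ∈ Set.Ioo (0:ℝ) 1)
    (hQ3 : ∀ k l : ℤ, l ≤ k → k ≤ 0 → ∀ v : Emm m,
      ‖Phi A k l (Q l v)‖ ≤ Cq * lamq ^ (k - l).toNat * ‖v‖)
    (hQ4 : ∀ k l : ℤ, k ≤ l → l ≤ 0 → ∀ v : Emm m,
      ‖Phi A k l ((1 - Q l) v)‖ ≤ Cq * lamq ^ (l - k).toNat * ‖v‖)
    (w : ℤ → Emm m) (W : ℝ) (hW0 : 0 ≤ W) (hW : ∀ k, ‖w k‖ ≤ W) :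
    ∃ vm : ℤ → Emm m,
      (∀ k, k ≤ 0 → ‖vm k‖ ≤ Cq*W*(1-lamq)⁻¹ + Cq*W*lamq*(1-lamq)⁻¹) ∧
      (∀ k, k ≤ -1 → vm (k+1) = A k (vm k) + w k) := by
  obtain ⟨hlam0, hlam1⟩ := hlamq
  set fm : ℤ → ℕ → Emm m :=
    fun k n => Phi A k (k-(n:ℤ)) (Q (k-(n:ℤ)) (w (k-(n:ℤ)-1))) with hfm
  have hgeom : Summable (fun n : ℕ => (Cq*W) * lamq^n) :=
    (summable_geometric_of_lt_one hlam0.le hlam1).mul_left _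
  have hfm_bound : ∀ k : ℤ, k ≤ 0 → ∀ n : ℕ, ‖fm k n‖ ≤ (Cq*W) * lamq^n := by
    intro k hk n
    have h1 := hQ3 k (k-(n:ℤ)) (by omega) hk (w (k-(n:ℤ)-1))
    rw [show (k-(k-(n:ℤ))).toNat = n by omega] at h1
    calc ‖fm k n‖ ≤ Cq * lamq^n * ‖w (k-(n:ℤ)-1)‖ := h1
    _ ≤ Cq * lamq^n * W := by
        apply mul_le_mul_of_nonneg_left (hW _)
        positivity
    _ = (Cq*W) * lamq^n := by ring
  have hfm_sum : ∀ k : ℤ, k ≤ 0 → Summable (fm k) :=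
    fun k hk => Summable.of_norm_bounded hgeom (hfm_bound k hk)
  have hfm_normsum : ∀ k : ℤ, k ≤ 0 → Summable (fun n => ‖fm k n‖) :=
    fun k hk => Summable.of_nonneg_of_le (fun n => norm_nonneg _) (hfm_bound k hk) hgeom
  set vm : ℤ → Emm m := fun k =>
    (∑' n, fm k n)
      - ∑ n ∈ Finset.range (-k).toNat, Phi A k (k+(n:ℤ)+1) ((1 - Q (k+(n:ℤ)+1)) (w (k+(n:ℤ))))
    with hvm
  refine ⟨vm, ?_, ?_⟩
  · -- bound
    intro k hk
    have htail : ‖∑' n, fm k n‖ ≤ Cq*W*(1-lamq)⁻¹ := by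
      calc ‖∑' n, fm k n‖ ≤ ∑' n, ‖fm k n‖ := norm_tsum_le_tsum_norm (hfm_normsum k hk)
      _ ≤ ∑' n : ℕ, (Cq*W) * lamq^n :=
          Summable.tsum_le_tsum (hfm_bound k hk) (hfm_normsum k hk) hgeom
      _ = (Cq*W) * ∑' n : ℕ, lamq^n := tsum_mul_left
      _ = Cq*W*(1-lamq)⁻¹ := by rw [tsum_geometric_of_lt_one hlam0.le hlam1]
    have hfin : ‖∑ n ∈ Finset.range (-k).toNat,
        Phi A k (k+(n:ℤ)+1) ((1 - Q (k+(n:ℤ)+1)) (w (k+(n:ℤ))))‖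
        ≤ Cq*W*lamq*(1-lamq)⁻¹ := by
      calc ‖∑ n ∈ Finset.range (-k).toNat,
          Phi A k (k+(n:ℤ)+1) ((1 - Q (k+(n:ℤ)+1)) (w (k+(n:ℤ))))‖
          ≤ ∑ n ∈ Finset.range (-k).toNat,
            ‖Phi A k (k+(n:ℤ)+1) ((1 - Q (k+(n:ℤ)+1)) (w (k+(n:ℤ))))‖ := norm_sum_le _ _
      _ ≤ ∑ n ∈ Finset.range (-k).toNat, (Cq*W*lamq) * lamq^n := by
          apply Finset.sum_le_sum
          intro n hn
          rw [Finset.mem_range] at hn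
          have h1 := hQ4 k (k+(n:ℤ)+1) (by omega) (by omega) (w (k+(n:ℤ)))
          rw [show (k+(n:ℤ)+1-k).toNat = n+1 by omega] at h1
          calc ‖Phi A k (k+(n:ℤ)+1) ((1 - Q (k+(n:ℤ)+1)) (w (k+(n:ℤ))))‖
              ≤ Cq * lamq^(n+1) * ‖w (k+(n:ℤ))‖ := h1
          _ ≤ Cq * lamq^(n+1) * W := by
              apply mul_le_mul_of_nonneg_left (hW _)
              positivity
          _ = (Cq*W*lamq) * lamq^n := by rw [pow_succ]; ring
      _ = (Cq*W*lamq) * ∑ n ∈ Finset.range (-k).toNat, lamq^n := by rw [Finset.mul_sum]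
      _ ≤ (Cq*W*lamq) * (1-lamq)⁻¹ := by
          apply mul_le_mul_of_nonneg_left (geom_partial_le lamq hlam0.le hlam1 _)
          positivity
      _ = Cq*W*lamq*(1-lamq)⁻¹ := by ring
    calc ‖vm k‖ ≤ ‖∑' n, fm k n‖ + ‖∑ n ∈ Finset.range (-k).toNat,
        Phi A k (k+(n:ℤ)+1) ((1 - Q (k+(n:ℤ)+1)) (w (k+(n:ℤ))))‖ := norm_sub_le _ _
    _ ≤ Cq*W*(1-lamq)⁻¹ + Cq*W*lamq*(1-lamq)⁻¹ := add_le_add htail hfin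
  · -- recurrence
    intro k hk
    set g : ℕ → Emm m :=
      fun n => Phi A (k+1) (k-(n:ℤ)) (Q (k-(n:ℤ)) (w (k-(n:ℤ)-1))) with hg
    have hg_def : ∀ n : ℕ, A k (fm k n) = g n := by
      intro n
      rw [hfm, hg]
      simp only []
      rw [phi_succ_apply]
    have hg_bound : ∀ n : ℕ, ‖g n‖ ≤ (Cq*W*lamq) * lamq^n := by
      intro n
      have h1 := hQ3 (k+1) (k-(n:ℤ)) (by omega) (by omega) (w (k-(n:ℤ)-1))
      rw [show ((k+1)-(k-(n:ℤ))).toNat = n+1 by omega] at h1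
      calc ‖g n‖ ≤ Cq * lamq^(n+1) * ‖w (k-(n:ℤ)-1)‖ := h1
      _ ≤ Cq * lamq^(n+1) * W := by
          apply mul_le_mul_of_nonneg_left (hW _)
          positivity
      _ = (Cq*W*lamq) * lamq^n := by rw [pow_succ]; ring
    have hg_sum : Summable g :=
      Summable.of_norm_bounded (hgeom.mul_left lamq |>.congr (fun n => by ring)) hg_bound
    have hAtail : A k (∑' n, fm k n) = ∑' n, g n := by
      have h1 : (A k : Emm m →L[ℝ] Emm m) (∑' n, fm k n)
          = ∑' n, (A k : Emm m →L[ℝ] Emm m) (fm k n) :=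
        ContinuousLinearMap.map_tsum _ (hfm_sum k (by omega))
      calc A k (∑' n, fm k n) = (A k : Emm m →L[ℝ] Emm m) (∑' n, fm k n) := rfl
      _ = ∑' n, (A k : Emm m →L[ℝ] Emm m) (fm k n) := h1
      _ = ∑' n, g n := by
          apply tsum_congr
          intro n
          exact hg_def n
    have hshift : ∀ n : ℕ, fm (k+1) (n+1) = g n := by
      intro n
      rw [hfm, hg]
      simp only []
      rw [show (k+1) - ((n+1:ℕ):ℤ) = k - (n:ℤ) by push_cast; ring]
    have hfm0 : fm (k+1) 0 = Q (k+1) (w k) := by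
      rw [hfm]
      simp only []
      rw [show (k+1) - ((0:ℕ):ℤ) = k+1 by push_cast; ring, phi_self_apply,
        show k+1-1 = k by ring]
    have hsplit : ∑' n, fm (k+1) n = Q (k+1) (w k) + ∑' n, g n := by
      rw [Summable.tsum_eq_zero_add (hfm_sum (k+1) (by omega)), hfm0]
      congr 1
      apply tsum_congr
      intro n
      exact hshift n
    have hAfin : A k (∑ n ∈ Finset.range (-k).toNat,
        Phi A k (k+(n:ℤ)+1) ((1 - Q (k+(n:ℤ)+1)) (w (k+(n:ℤ)))))
        = (∑ n ∈ Finset.range (-(k+1)).toNat,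
            Phi A (k+1) ((k+1)+(n:ℤ)+1) ((1 - Q ((k+1)+(n:ℤ)+1)) (w ((k+1)+(n:ℤ)))))
          + (1 - Q (k+1)) (w k) := by
      rw [map_sum]
      rw [show (-k).toNat = (-(k+1)).toNat + 1 by omega, Finset.sum_range_succ']
      congr 1
      · apply Finset.sum_congr rfl
        intro n _
        have e1 : k + ((n+1:ℕ):ℤ) + 1 = (k+1) + (n:ℤ) + 1 := by push_cast; ring
        have e2 : k + ((n+1:ℕ):ℤ) = (k+1) + (n:ℤ) := by push_cast; ring
        rw [e1, e2, phi_succ_apply]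
      · rw [show k+((0:ℕ):ℤ)+1 = k+1 by push_cast; ring,
          show k+((0:ℕ):ℤ) = k by push_cast; ring, ← phi_succ_apply, phi_self_apply]
    show (∑' n, fm (k+1) n) - (∑ n ∈ Finset.range (-(k+1)).toNat,
        Phi A (k+1) ((k+1)+(n:ℤ)+1) ((1 - Q ((k+1)+(n:ℤ)+1)) (w ((k+1)+(n:ℤ))))) = A k (vm k) + w k
    rw [hsplit, hvm]
    simp only [map_sub]
    rw [hAtail, hAfin]
    have hsub : ((1 : Emm m →L[ℝ] Emm m) - Q (k+1)) (w k) = w k - Q (k+1) (w k) := by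
      simp [ContinuousLinearMap.sub_apply]
    rw [hsub]
    abel

end BackwardMinus
section BackwardMain

variable {m : ℕ}

theorem backward_direction (A : ℤ → (Emm m ≃L[ℝ] Emm m))
    (hplus : HyperbolicOnPlusRay A) (hminus : HyperbolicOnMinusRay A)
    (htrans : ∀ u : Emm m, ∃ x ∈ Bplus A, ∃ y ∈ Bminus A, u = x + y) :
    ∀ w : ℤ → Emm m, (∃ C : ℝ, ∀ k : ℤ, ‖w k‖ ≤ C) →
      ∃ v : ℤ → Emm m, (∃ C : ℝ, ∀ k : ℤ, ‖v k‖ ≤ C) ∧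
        ∀ k : ℤ, v (k + 1) = A k (v k) + w k := by
  obtain ⟨Cp, lamp, P, hCp0, hlampIoo, hPidem, hPcomm, hP3, hP4⟩ := hplus
  obtain ⟨Cq, lamq, Q, hCq0, hlamqIoo, hQidem, hQcomm, hQ3, hQ4⟩ := hminus
  intro w ⟨Cw, hCw⟩
  set W : ℝ := max Cw 0 with hWdef
  have hW0 : 0 ≤ W := le_max_right _ _
  have hWb : ∀ k, ‖w k‖ ≤ W := fun k => le_trans (hCw k) (le_max_left _ _)
  obtain ⟨vp, hvpb, hvprec⟩ :=
    plus_solution A Cp lamp P hCp0 hlampIoo hP3 hP4 w W hW0 hWb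
  obtain ⟨vm, hvmb, hvmrec⟩ :=
    minus_solution A Cq lamq Q hCq0 hlamqIoo hQ3 hQ4 w W hW0 hWb
  obtain ⟨x, hx, y, hy, hxy⟩ := htrans (vp 0 - vm 0)
  have hlamp1 : lamp ≤ 1 := hlampIoo.2.le
  have hlamp0 : 0 ≤ lamp := hlampIoo.1.le
  have hlamq1 : lamq ≤ 1 := hlamqIoo.2.le
  have hlamq0 : 0 ≤ lamq := hlamqIoo.1.le
  -- x is in the range of P 0
  have hP0x : ((1 : Emm m →L[ℝ] Emm m) - P 0) x = 0 := by
    have hb : ∀ k : ℤ, 0 ≤ k → ‖((1 : Emm m →L[ℝ] Emm m) - P 0) x‖ ≤ Cp * ‖Phi A k 0 x‖ := by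
      intro k hk
      have hcomm1 := one_sub_commute (P 0) (P k) (Phi A 0 k) (hPcomm 0 k le_rfl hk)
      have h2 : ((1 : Emm m →L[ℝ] Emm m) - P 0) (Phi A 0 k (Phi A k 0 x))
          = Phi A 0 k ((1 - P k) (Phi A k 0 x)) := by
        have := congrArg (fun (T : Emm m →L[ℝ] Emm m) => T (Phi A k 0 x)) hcomm1
        simpa using this
      rw [phi_apply_phi, phi_self_apply] at h2
      rw [h2]
      have h3 := hP4 0 k le_rfl hk (Phi A k 0 x)
      calc ‖Phi A 0 k ((1 - P k) (Phi A k 0 x))‖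
          ≤ Cp * lamp ^ ((k-0).toNat) * ‖Phi A k 0 x‖ := h3
      _ ≤ Cp * 1 * ‖Phi A k 0 x‖ := by
          apply mul_le_mul_of_nonneg_right ?_ (norm_nonneg _)
          apply mul_le_mul_of_nonneg_left (pow_le_one₀ hlamp0 hlamp1) hCp0.le
      _ = Cp * ‖Phi A k 0 x‖ := by ring
    have ht : Filter.Tendsto (fun k : ℤ => Cp * ‖Phi A k 0 x‖) Filter.atTop (nhds 0) := by
      have h1 : Filter.Tendsto (fun k : ℤ => ‖Phi A k 0 x‖) Filter.atTop (nhds 0) := hx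
      simpa using h1.const_mul Cp
    have hle : ‖((1 : Emm m →L[ℝ] Emm m) - P 0) x‖ ≤ 0 :=
      ge_of_tendsto ht ((Filter.eventually_ge_atTop 0).mono hb)
    exact norm_le_zero_iff.mp hle
  have hxP : P 0 x = x := by
    have h1 : x - P 0 x = 0 := by
      have := hP0x
      simpa [ContinuousLinearMap.sub_apply] using this
    have := sub_eq_zero.mp h1
    exact this.symm
  have hxbound : ∀ k : ℤ, 0 ≤ k → ‖Phi A k 0 x‖ ≤ Cp * ‖x‖ := by
    intro k hk
    have h1 := hP3 k 0 le_rfl hk x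
    rw [hxP] at h1
    calc ‖Phi A k 0 x‖ ≤ Cp * lamp ^ ((k-0).toNat) * ‖x‖ := h1
    _ ≤ Cp * 1 * ‖x‖ := by
        apply mul_le_mul_of_nonneg_right ?_ (norm_nonneg _)
        apply mul_le_mul_of_nonneg_left (pow_le_one₀ hlamp0 hlamp1) hCp0.le
    _ = Cp * ‖x‖ := by ring
  -- y is in the range of 1 - Q 0
  have hQ0y : Q 0 y = 0 := by
    have hb : ∀ k : ℤ, k ≤ 0 → ‖Q 0 y‖ ≤ Cq * ‖Phi A k 0 y‖ := by
      intro k hk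
      have hcomm1 := hQcomm 0 k le_rfl hk
      have h2 : Q 0 (Phi A 0 k (Phi A k 0 y)) = Phi A 0 k (Q k (Phi A k 0 y)) := by
        have := congrArg (fun (T : Emm m →L[ℝ] Emm m) => T (Phi A k 0 y)) hcomm1
        simpa using this
      rw [phi_apply_phi, phi_self_apply] at h2
      rw [h2]
      have h3 := hQ3 0 k hk le_rfl (Phi A k 0 y)
      calc ‖Phi A 0 k (Q k (Phi A k 0 y))‖
          ≤ Cq * lamq ^ ((0-k).toNat) * ‖Phi A k 0 y‖ := h3
      _ ≤ Cq * 1 * ‖Phi A k 0 y‖ := by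
          apply mul_le_mul_of_nonneg_right ?_ (norm_nonneg _)
          apply mul_le_mul_of_nonneg_left (pow_le_one₀ hlamq0 hlamq1) hCq0.le
      _ = Cq * ‖Phi A k 0 y‖ := by ring
    have ht : Filter.Tendsto (fun k : ℤ => Cq * ‖Phi A k 0 y‖) Filter.atBot (nhds 0) := by
      have h1 : Filter.Tendsto (fun k : ℤ => ‖Phi A k 0 y‖) Filter.atBot (nhds 0) := hy
      simpa using h1.const_mul Cq
    have hle : ‖Q 0 y‖ ≤ 0 :=
      ge_of_tendsto ht ((Filter.eventually_le_atBot 0).mono hb)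
    exact norm_le_zero_iff.mp hle
  have hybound : ∀ k : ℤ, k ≤ 0 → ‖Phi A k 0 y‖ ≤ Cq * ‖y‖ := by
    intro k hk
    have h1 := hQ4 k 0 hk le_rfl y
    have h2 : ((1 : Emm m →L[ℝ] Emm m) - Q 0) y = y := by
      simp [ContinuousLinearMap.sub_apply, hQ0y]
    rw [h2] at h1
    calc ‖Phi A k 0 y‖ ≤ Cq * lamq ^ ((0-k).toNat) * ‖y‖ := h1
    _ ≤ Cq * 1 * ‖y‖ := by
        apply mul_le_mul_of_nonneg_right ?_ (norm_nonneg _)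
        apply mul_le_mul_of_nonneg_left (pow_le_one₀ hlamq0 hlamq1) hCq0.le
    _ = Cq * ‖y‖ := by ring
  -- the glued solution
  set v : ℤ → Emm m := fun k => if 0 ≤ k then vp k - Phi A k 0 x else vm k + Phi A k 0 y
    with hv
  refine ⟨v, ⟨max (Cp*W*(1-lamp)⁻¹ + Cp*W*lamp*(1-lamp)⁻¹ + Cp * ‖x‖)
      (Cq*W*(1-lamq)⁻¹ + Cq*W*lamq*(1-lamq)⁻¹ + Cq * ‖y‖), ?_⟩, ?_⟩
  · intro k
    simp only [hv]
    split_ifs with hk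
    · refine le_max_of_le_left ?_
      calc ‖vp k - Phi A k 0 x‖ ≤ ‖vp k‖ + ‖Phi A k 0 x‖ := norm_sub_le _ _
      _ ≤ Cp*W*(1-lamp)⁻¹ + Cp*W*lamp*(1-lamp)⁻¹ + Cp * ‖x‖ :=
          add_le_add (hvpb k hk) (hxbound k hk)
    · refine le_max_of_le_right ?_
      calc ‖vm k + Phi A k 0 y‖ ≤ ‖vm k‖ + ‖Phi A k 0 y‖ := norm_add_le _ _
      _ ≤ Cq*W*(1-lamq)⁻¹ + Cq*W*lamq*(1-lamq)⁻¹ + Cq * ‖y‖ :=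
          add_le_add (hvmb k (by omega)) (hybound k (by omega))
  · intro k
    rcases le_or_gt 0 k with hk | hk
    · simp only [hv, if_pos hk, if_pos (by omega : (0:ℤ) ≤ k + 1)]
      rw [hvprec k hk, phi_succ_apply, map_sub]
      abel
    · rcases eq_or_lt_of_le (by omega : k ≤ -1) with hk1 | hk1
      · subst hk1
        simp only [hv, if_pos (by omega : (0:ℤ) ≤ -1 + 1), if_neg (by omega : ¬ (0:ℤ) ≤ -1)]
        have h1 := hvmrec (-1) le_rfl
        rw [show (-1:ℤ)+1 = 0 by ring] at h1
        rw [show (-1:ℤ)+1 = 0 by ring, phi_self_apply, map_add]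
        have h2 : A (-1) (Phi A (-1) 0 y) = y := by
          rw [← phi_succ_apply, show (-1:ℤ)+1 = 0 by ring, phi_self_apply]
        have h3 : A (-1) (vm (-1)) = vm 0 - w (-1) := by rw [h1]; abel
        rw [h2, h3]
        have h4 : vp 0 = vm 0 + (x + y) := by rw [← hxy]; abel
        rw [h4]
        abel
      · simp only [hv, if_neg (by omega : ¬ (0:ℤ) ≤ k + 1), if_neg (by omega : ¬ (0:ℤ) ≤ k)]
        rw [hvmrec k (by omega), phi_succ_apply, map_add]
        abel

end BackwardMain

/-- **Pliss' theorem.** For a sequence of linear isomorphisms of `ℝ^m` with uniformly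
bounded norms and inverse norms, solvability in bounded sequences of the inhomogeneous
difference equation `v_{k+1} = A_k v_k + w_k` for every bounded `{w_k}` is equivalent to
hyperbolicity of `{A_k}` on both rays `[0,+∞)`, `(-∞,0]` together with transversality
`B⁺(𝒜) + B⁻(𝒜) = ℝ^m`. -/
theorem pliss_bounded_solvability_iff_hyperbolic_and_transverse
    {m : ℕ} (A : ℤ → (EuclideanSpace ℝ (Fin m) ≃L[ℝ] EuclideanSpace ℝ (Fin m)))
    (N : ℝ) (hN : 0 < N)
    (hA : ∀ k : ℤ, ‖(A k : EuclideanSpace ℝ (Fin m) →L[ℝ] EuclideanSpace ℝ (Fin m))‖ ≤ N)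
    (hAinv : ∀ k : ℤ,
      ‖((A k).symm : EuclideanSpace ℝ (Fin m) →L[ℝ] EuclideanSpace ℝ (Fin m))‖ ≤ N) :
    (∀ w : ℤ → EuclideanSpace ℝ (Fin m), (∃ C : ℝ, ∀ k : ℤ, ‖w k‖ ≤ C) →
        ∃ v : ℤ → EuclideanSpace ℝ (Fin m), (∃ C : ℝ, ∀ k : ℤ, ‖v k‖ ≤ C) ∧
          ∀ k : ℤ, v (k + 1) = A k (v k) + w k) ↔
      (HyperbolicOnPlusRay A ∧ HyperbolicOnMinusRay A ∧
        ∀ u : EuclideanSpace ℝ (Fin m),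
          ∃ x ∈ Bplus A, ∃ y ∈ Bminus A, u = x + y) := by
  constructor
  · intro hyp
    exact forward_direction A N hN hA hAinv hyp
  · rintro ⟨hplus, hminus, htrans⟩
    exact backward_direction A hplus hminus htrans
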